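/- arXiv:1405.3436 — 12 statements merged into one kernel-verified Lean document; each statement's English description precedes it below -/
import Mathlib

section
/- Let D be a (v,k,λ)-design with block number b and replication number r. Then γ(D) ≥ v·(r-1)/(kr-1) + b·(k-1)/(kr-1), where the right-hand side is a real number. -/
open Finset

variable {α ι : Type*}

/-- The incidence (Levi) graph of the block family `B` indexed by `ι` over point set `α`:
a bipartite graph where point `p` is adjacent to block `i` iff `p ∈ B i`. -/
def incGraph (B : ι → Finset α) : SimpleGraph (α ⊕ ι) where
  Adj x y :=
    (∃ p i, x = Sum.inl p ∧ y = Sum.inr i ∧ p ∈ B i) ∨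
    (∃ p i, x = Sum.inr i ∧ y = Sum.inl p ∧ p ∈ B i)
  symm := by
    constructor
    rintro x y (⟨p, i, rfl, rfl, h⟩ | ⟨p, i, rfl, rfl, h⟩)
    · exact Or.inr ⟨p, i, rfl, rfl, h⟩
    · exact Or.inl ⟨p, i, rfl, rfl, h⟩
  loopless := by
    constructor
    rintro x (⟨p, i, rfl, h, -⟩ | ⟨p, i, rfl, h, -⟩) <;> simp at h

/-- A dominating set of vertices in a graph: every vertex not in `S` has a neighbour in `S`. -/
def IsDomSet {V : Type*} (G : SimpleGraph V) (S : Finset V) : Prop :=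
  ∀ v ∉ S, ∃ s ∈ S, G.Adj v s

/-- The domination number of a graph: the minimum size of a dominating set. -/
noncomputable def domNum {V : Type*} (G : SimpleGraph V) : ℕ :=
  sInf {n | ∃ S : Finset V, IsDomSet G S ∧ S.card = n}

/-- For a `(v,k,λ)`-design with `b` blocks and replication number `r`,
`γ(D) ≥ v(r-1)/(kr-1) + b(k-1)/(kr-1)` as real numbers. -/
theorem stmt1 [Fintype α] [Fintype ι] [DecidableEq α]
    (B : ι → Finset α) (v k l b r : ℕ)
    (hv : Fintype.card α = v)
    (hk2 : 2 ≤ k) (hkv : k < v) (hl : 1 ≤ l)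
    (hblock : ∀ i, (B i).card = k)
    (hpair : ∀ x y : α, x ≠ y →
      (Finset.univ.filter fun i => x ∈ B i ∧ y ∈ B i).card = l)
    (hb : Fintype.card ι = b)
    (hrep : ∀ x : α, (Finset.univ.filter fun i => x ∈ B i).card = r) :
    (v : ℝ) * ((r : ℝ) - 1) / ((k : ℝ) * (r : ℝ) - 1)
      + (b : ℝ) * ((k : ℝ) - 1) / ((k : ℝ) * (r : ℝ) - 1)
      ≤ (domNum (incGraph B) : ℝ) := by
  classical
  -- the set defining domNum is nonempty
  have hne : {n | ∃ S : Finset (α ⊕ ι), IsDomSet (incGraph B) S ∧ S.card = n}.Nonempty :=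
    ⟨(Finset.univ : Finset (α ⊕ ι)).card, Finset.univ,
      fun x hx => absurd (Finset.mem_univ x) hx, rfl⟩
  obtain ⟨S, hS, hcard⟩ := Nat.sInf_mem hne
  set Sp : Finset α := S.toLeft with hSp
  set Sq : Finset ι := S.toRight with hSq
  -- r ≥ 1
  have hr1 : 1 ≤ r := by
    have h1 : 1 < Fintype.card α := by omega
    obtain ⟨x, y, hxy⟩ := Fintype.exists_pair_of_one_lt_card h1
    have := hpair x y hxy
    have hpos : 0 < (Finset.univ.filter fun i => x ∈ B i ∧ y ∈ B i).card := by omega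
    obtain ⟨i, hi⟩ := Finset.card_pos.mp hpos
    have hxB : x ∈ B i := (Finset.mem_filter.mp hi).2.1
    have hc : 0 < (Finset.univ.filter fun j => x ∈ B j).card :=
      Finset.card_pos.mpr ⟨i, Finset.mem_filter.mpr ⟨Finset.mem_univ i, hxB⟩⟩
    rw [hrep x] at hc
    omega
  -- inequality 1 : v ≤ |Sp| + k * |Sq|
  have h1 : v ≤ Sp.card + k * Sq.card := by
    have hsub : (Finset.univ : Finset α) ⊆ Sp ∪ Sq.biUnion B := by
      intro x _
      by_cases hx : x ∈ Sp
      · exact Finset.mem_union_left _ hx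
      · have hxS : Sum.inl x ∉ S := by simpa [hSp] using hx
        obtain ⟨s, hsS, hadj⟩ := hS _ hxS
        rcases hadj with ⟨p, i, hp, hs, hmem⟩ | ⟨p, i, hp, _, _⟩
        · cases hp
          subst hs
          refine Finset.mem_union_right _ (Finset.mem_biUnion.mpr ⟨i, ?_, hmem⟩)
          simpa [hSq] using hsS
        · simp at hp
    calc v = (Finset.univ : Finset α).card := by rw [Finset.card_univ, hv]
      _ ≤ (Sp ∪ Sq.biUnion B).card := Finset.card_le_card hsub
      _ ≤ Sp.card + (Sq.biUnion B).card := Finset.card_union_le _ _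
      _ ≤ Sp.card + ∑ i ∈ Sq, (B i).card :=
          Nat.add_le_add_left (Finset.card_biUnion_le) _
      _ = Sp.card + k * Sq.card := by
          simp [hblock, Finset.sum_const, Nat.mul_comm]
  -- inequality 2 : b ≤ |Sq| + r * |Sp|
  have h2 : b ≤ Sq.card + r * Sp.card := by
    have hsub : (Finset.univ : Finset ι) ⊆
        Sq ∪ Sp.biUnion (fun x => Finset.univ.filter fun j => x ∈ B j) := by
      intro i _
      by_cases hi : i ∈ Sq
      · exact Finset.mem_union_left _ hi
      · have hiS : Sum.inr i ∉ S := by simpa [hSq] using hi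
        obtain ⟨s, hsS, hadj⟩ := hS _ hiS
        rcases hadj with ⟨p, j, hp, _, _⟩ | ⟨p, j, hp, hs, hmem⟩
        · simp at hp
        · cases hp
          subst hs
          refine Finset.mem_union_right _ (Finset.mem_biUnion.mpr ⟨p, ?_, ?_⟩)
          · simpa [hSp] using hsS
          · exact Finset.mem_filter.mpr ⟨Finset.mem_univ _, hmem⟩
    calc b = (Finset.univ : Finset ι).card := by rw [Finset.card_univ, hb]
      _ ≤ _ := Finset.card_le_card hsub
      _ ≤ Sq.card + (Sp.biUnion fun x => Finset.univ.filter fun j => x ∈ B j).card :=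
          Finset.card_union_le _ _
      _ ≤ Sq.card + ∑ x ∈ Sp, (Finset.univ.filter fun j => x ∈ B j).card :=
          Nat.add_le_add_left (Finset.card_biUnion_le) _
      _ = Sq.card + r * Sp.card := by
          simp [hrep, Finset.sum_const, Nat.mul_comm]
  -- pass to the reals
  have hcards : Sp.card + Sq.card = domNum (incGraph B) := by
    unfold domNum; rw [← hcard]; exact Finset.card_toLeft_add_card_toRight
  set p := Sp.card
  set q := Sq.card
  have hkR : (2 : ℝ) ≤ k := by exact_mod_cast hk2
  have hrR : (1 : ℝ) ≤ r := by exact_mod_cast hr1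
  have h1R : (v : ℝ) ≤ p + k * q := by exact_mod_cast h1
  have h2R : (b : ℝ) ≤ q + r * p := by exact_mod_cast h2
  have hnR : (domNum (incGraph B) : ℝ) = p + q := by exact_mod_cast hcards.symm
  have hpos : (0 : ℝ) < k * r - 1 := by nlinarith
  rw [← add_div, div_le_iff₀ hpos, hnR]
  have hp0 : (0 : ℝ) ≤ p := Nat.cast_nonneg _
  have hq0 : (0 : ℝ) ≤ q := Nat.cast_nonneg _
  nlinarith [mul_le_mul_of_nonneg_right h1R (by linarith : (0:ℝ) ≤ (r:ℝ) - 1),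
    mul_le_mul_of_nonneg_right h2R (by linarith : (0:ℝ) ≤ (k:ℝ) - 1)]
end

section
/- Let D be a (v,k,λ)-design with replication number r. Then γ(D) ≤ τ(D) + r. -/
open Finset

variable {α ι : Type*}

/-- The transversal number of the block family `B`: the minimum size of a set of points
meeting every block. -/
noncomputable def transNum (B : ι → Finset α) : ℕ :=
  sInf {n | ∃ T : Finset α, (∀ i, ∃ x ∈ B i, x ∈ T) ∧ T.card = n}

/-- For a `(v,k,λ)`-design with replication number `r`,
`γ(D) ≤ τ(D) + r`. -/
theorem stmt4 [Fintype α] [Fintype ι] [DecidableEq α]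
    (B : ι → Finset α) (v k l r : ℕ)
    (hv : Fintype.card α = v)
    (hk2 : 2 ≤ k) (hkv : k < v) (hl : 1 ≤ l)
    (hblock : ∀ i, (B i).card = k)
    (hpair : ∀ x y : α, x ≠ y →
      (Finset.univ.filter fun i => x ∈ B i ∧ y ∈ B i).card = l)
    (hrep : ∀ x : α, (Finset.univ.filter fun i => x ∈ B i).card = r) :
    domNum (incGraph B) ≤ transNum B + r := by

  classical
  -- α has at least 2 elements
  have hv3 : 3 ≤ v := lt_of_le_of_lt hk2 hkv
  have h2 : 1 < Fintype.card α := by omega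
  obtain ⟨x0, y0, hxy⟩ := Fintype.exists_pair_of_one_lt_card h2
  -- the set defining transNum is nonempty
  have hne : {n | ∃ T : Finset α, (∀ i, ∃ x ∈ B i, x ∈ T) ∧ T.card = n}.Nonempty := by
    refine ⟨(Finset.univ : Finset α).card, Finset.univ, fun i => ?_, rfl⟩
    have : (B i).Nonempty := Finset.card_pos.mp (by rw [hblock]; omega)
    obtain ⟨x, hx⟩ := this
    exact ⟨x, hx, Finset.mem_univ x⟩
  obtain ⟨T, hT, hTcard⟩ := Nat.sInf_mem hne
  -- T is nonempty
  have hiota : ∃ i : ι, x0 ∈ B i ∧ y0 ∈ B i := by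
    have := hpair x0 y0 hxy
    have hpos : 0 < (Finset.univ.filter fun i => x0 ∈ B i ∧ y0 ∈ B i).card := by omega
    obtain ⟨i, hi⟩ := Finset.card_pos.mp hpos
    exact ⟨i, (Finset.mem_filter.mp hi).2⟩
  obtain ⟨i0, hi0, _⟩ := hiota
  obtain ⟨x, hxB, hxT⟩ := hT i0
  -- The dominating set
  set S : Finset (α ⊕ ι) :=
    T.image Sum.inl ∪ (Finset.univ.filter fun i => x ∈ B i).image Sum.inr with hS
  have hdom : IsDomSet (incGraph B) S := by
    rintro (y | i) hv'
    · -- point y, y ∉ T (else inl y ∈ S)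
      by_cases hy : y = x
      · exfalso; apply hv'
        rw [hS]
        exact Finset.mem_union_left _ (Finset.mem_image_of_mem _ (hy ▸ hxT))
      · have := hpair y x hy
        have hpos : 0 < (Finset.univ.filter fun i => y ∈ B i ∧ x ∈ B i).card := by omega
        obtain ⟨i, hi⟩ := Finset.card_pos.mp hpos
        obtain ⟨hyB, hxB'⟩ := (Finset.mem_filter.mp hi).2
        refine ⟨Sum.inr i, ?_, Or.inl ⟨y, i, rfl, rfl, hyB⟩⟩
        rw [hS]
        exact Finset.mem_union_right _
          (Finset.mem_image_of_mem _ (Finset.mem_filter.mpr ⟨Finset.mem_univ _, hxB'⟩))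
    · obtain ⟨t, htB, htT⟩ := hT i
      refine ⟨Sum.inl t, ?_, Or.inr ⟨t, i, rfl, rfl, htB⟩⟩
      rw [hS]
      exact Finset.mem_union_left _ (Finset.mem_image_of_mem _ htT)
  have hcard : S.card ≤ transNum B + r := by
    calc S.card ≤ (T.image Sum.inl).card +
        ((Finset.univ.filter fun i => x ∈ B i).image Sum.inr).card :=
          Finset.card_union_le _ _
      _ ≤ T.card + (Finset.univ.filter fun i => x ∈ B i).card := by
          gcongr <;> exact Finset.card_image_le
      _ = transNum B + r := by rw [hTcard, hrep x]; rfl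
  exact le_trans (Nat.sInf_le ⟨S, hdom, rfl⟩) hcard
end

section
/- Let D be a Steiner design (a (v,k,1)-design), let B be a block of D, let x ∈ B, and set P = B \ {x} (a punctured block). Then the set I_P consisting of the points of P together with all blocks of D disjoint from P is a dominating set of the incidence graph G_D. -/
open Finset

variable {α ι : Type*}

/-- The neat set `I_P` associated with a set of points `P`: the points of `P` together with
all blocks disjoint from `P`. -/
def neatSet [DecidableEq α] [DecidableEq ι] [Fintype ι] (B : ι → Finset α)
    (P : Finset α) : Finset (α ⊕ ι) :=
  P.image Sum.inl ∪ (Finset.univ.filter fun i => ∀ p ∈ P, p ∉ B i).image Sum.inr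

/-- In a Steiner design (`λ = 1`), for any block `B i₀` and point
`x ∈ B i₀`, letting `P = B i₀ \ {x}` be the punctured block, the set `I_P` consisting
of the points of `P` together with all blocks disjoint from `P` is dominating. -/
theorem stmt7 [Fintype α] [Fintype ι] [DecidableEq α] [DecidableEq ι]
    (B : ι → Finset α) (v k : ℕ)
    (hv : Fintype.card α = v)
    (hk2 : 2 ≤ k) (hkv : k < v)
    (hblock : ∀ i, (B i).card = k)
    (hpair : ∀ x y : α, x ≠ y →
      (Finset.univ.filter fun i => x ∈ B i ∧ y ∈ B i).card = 1)
    (i₀ : ι) (x : α) (hx : x ∈ B i₀) :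
    IsDomSet (incGraph B) (neatSet B ((B i₀).erase x)) := by
  -- existence of a block through two distinct points
  have hex : ∀ a b : α, a ≠ b → ∃ i, a ∈ B i ∧ b ∈ B i := by
    intro a b hab
    have h := hpair a b hab
    have hp : (Finset.univ.filter fun i => a ∈ B i ∧ b ∈ B i).Nonempty := by
      rw [← Finset.card_pos, h]; norm_num
    obtain ⟨i, hi⟩ := hp
    simp only [Finset.mem_filter] at hi
    exact ⟨i, hi.2⟩
  -- uniqueness of block through two distinct points
  have huniq : ∀ a b : α, a ≠ b → ∀ i j, a ∈ B i → b ∈ B i → a ∈ B j → b ∈ B j → i = j := by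
    intro a b hab i j hi1 hi2 hj1 hj2
    have h := hpair a b hab
    exact Finset.card_le_one.mp h.le i (by simp [hi1, hi2]) j (by simp [hj1, hj2])
  have hP : ∀ q ∈ (B i₀).erase x, Sum.inl q ∈ neatSet B ((B i₀).erase x) := by
    intro q hq
    simp only [neatSet, Finset.mem_union, Finset.mem_image]
    exact Or.inl ⟨q, hq, rfl⟩
  intro w hw
  obtain p | i := w
  · -- point case
    have hp : p ∉ (B i₀).erase x := fun h => hw (hP p h)
    by_cases hpx : p = x
    · -- p = x : find z ∉ B i₀, take the block through x and z
      subst hpx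
      have : ∃ z : α, z ∉ B i₀ := by
        by_contra h
        push_neg at h
        have : Finset.univ ⊆ B i₀ := fun z _ => h z
        have := Finset.card_le_card this
        rw [Finset.card_univ, hv, hblock] at this
        omega
      obtain ⟨z, hz⟩ := this
      have hzp : z ≠ p := fun h => hz (h ▸ hx)
      obtain ⟨i, hpi, hzi⟩ := hex p z hzp.symm
      have hdisj : ∀ q ∈ (B i₀).erase p, q ∉ B i := by
        intro q hq hqi
        obtain ⟨hqx, hq0⟩ := Finset.mem_erase.mp hq
        have := huniq p q (Ne.symm hqx) i i₀ hpi hqi hx hq0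
        exact hz (this ▸ hzi)
      refine ⟨Sum.inr i, ?_, ?_⟩
      · simp only [neatSet, Finset.mem_union, Finset.mem_image]
        exact Or.inr ⟨i, by simpa using hdisj, rfl⟩
      · exact Or.inl ⟨p, i, rfl, rfl, hpi⟩
    · -- p ≠ x : then p ∉ B i₀; take the block through p and x
      have hp0 : p ∉ B i₀ := fun h => hp (Finset.mem_erase.mpr ⟨hpx, h⟩)
      obtain ⟨i, hpi, hxi⟩ := hex p x hpx
      have hdisj : ∀ q ∈ (B i₀).erase x, q ∉ B i := by
        intro q hq hqi
        obtain ⟨hqx, hq0⟩ := Finset.mem_erase.mp hq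
        have := huniq x q (Ne.symm hqx) i i₀ hxi hqi hx hq0
        exact hp0 (this ▸ hpi)
      refine ⟨Sum.inr i, ?_, ?_⟩
      · simp only [neatSet, Finset.mem_union, Finset.mem_image]
        exact Or.inr ⟨i, by simpa using hdisj, rfl⟩
      · exact Or.inl ⟨p, i, rfl, rfl, hpi⟩
  · -- block case: i meets P since i ∉ S
    have : ¬ ∀ q ∈ (B i₀).erase x, q ∉ B i := by
      intro h
      apply hw
      simp only [neatSet, Finset.mem_union, Finset.mem_image]
      exact Or.inr ⟨i, by simpa using h, rfl⟩
    push_neg at this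
    obtain ⟨q, hq, hqi⟩ := this
    exact ⟨Sum.inl q, hP q hq, Or.inr ⟨q, i, rfl, rfl, hqi⟩⟩
end

section
/- Let D be a (v,k,λ)-design, let S be a dominating set of the incidence graph G_D, and let P = π(S) be the set of points of D belonging to S. Then |S| ≥ ⌈(v + |P|·(k-1))/k⌉. -/
open Finset

variable {α ι : Type*}

/-- Let `S` be a dominating set in the incidence graph of a
`(v,k,λ)`-design and `P = π(S)` the set of points in `S`. Then
`|S| ≥ ⌈(v + |P|(k-1))/k⌉`. -/
theorem stmt8 [Fintype α] [Fintype ι] [DecidableEq α]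
    (B : ι → Finset α) (v k l : ℕ)
    (hv : Fintype.card α = v)
    (hk2 : 2 ≤ k) (hkv : k < v) (hl : 1 ≤ l)
    (hblock : ∀ i, (B i).card = k)
    (hpair : ∀ x y : α, x ≠ y →
      (Finset.univ.filter fun i => x ∈ B i ∧ y ∈ B i).card = l)
    (S : Finset (α ⊕ ι)) (hS : IsDomSet (incGraph B) S)
    (P : Finset α) (hP : ∀ x : α, x ∈ P ↔ Sum.inl x ∈ S) :
    (v + P.card * (k - 1)) ⌈/⌉ k ≤ S.card := by
  classical
  have hk1 : 0 < k := by omega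
  have hdom : ∀ x : α, x ∉ P → ∃ i, Sum.inr i ∈ S ∧ x ∈ B i := by
    intro x hx
    have hxS : Sum.inl x ∉ S := fun h => hx ((hP x).2 h)
    obtain ⟨s, hsS, hadj⟩ := hS _ hxS
    rcases hadj with ⟨p, i, hp, hi, hmem⟩ | ⟨p, i, hp, hi, hmem⟩
    · refine ⟨i, hi ▸ hsS, ?_⟩
      cases hp; exact hmem
    · simp at hp
  have hι : Nonempty ι := by
    have h2 : 2 ≤ Fintype.card α := by omega
    obtain ⟨x, y, hxy⟩ := Fintype.exists_pair_of_one_lt_card (α := α) (by rw [hv]; omega)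
    have := hpair x y hxy
    have hne : (Finset.univ.filter fun i => x ∈ B i ∧ y ∈ B i).Nonempty := by
      rw [← card_pos, this]; omega
    exact ⟨hne.choose⟩
  choose! f hfS hfB using hdom
  set Q : Finset α := univ \ P with hQ
  set T : Finset ι := univ.filter (fun i => Sum.inr i ∈ S) with hT
  have hQcard : Q.card = v - P.card := by
    simp [hQ, card_sdiff_of_subset (subset_univ P), hv]
  have hPv : P.card ≤ v := by
    have := card_le_card (subset_univ P); simpa [hv] using this
  have hcount : Q.card ≤ k * T.card := by
    apply card_le_mul_card_image_of_maps_to (f := f)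
    · intro x hx
      have hxP : x ∉ P := by simpa [hQ] using hx
      simp only [hT, mem_filter, mem_univ, true_and]
      exact hfS x hxP
    · intro i _
      have hsub : {a ∈ Q | f a = i} ⊆ B i := by
        intro x hx
        simp only [mem_filter] at hx
        obtain ⟨hxQ, hfx⟩ := hx
        have hxP : x ∉ P := by simpa [hQ] using hxQ
        have := hfB x hxP
        rwa [hfx] at this
      calc {a ∈ Q | f a = i}.card ≤ (B i).card := card_le_card hsub
        _ = k := hblock i
  -- |P| + |T| ≤ |S|
  have hsplit : P.card + T.card ≤ S.card := by
    have hsub : P.image Sum.inl ∪ T.image Sum.inr ⊆ S := by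
      intro x hx
      rcases mem_union.mp hx with h | h
      · obtain ⟨p, hp, rfl⟩ := mem_image.mp h
        exact (hP p).1 hp
      · obtain ⟨i, hi, rfl⟩ := mem_image.mp h
        simpa [hT] using (mem_filter.mp hi).2
    have hdisj : Disjoint (P.image Sum.inl) (T.image Sum.inr) := by
      simp only [Finset.disjoint_left]
      intro x h1 h2
      obtain ⟨p, _, rfl⟩ := mem_image.mp h1
      obtain ⟨i, _, h⟩ := mem_image.mp h2
      exact absurd h (by simp)
    calc P.card + T.card
        = (P.image Sum.inl).card + (T.image Sum.inr).card := by
          rw [card_image_of_injective _ Sum.inl_injective,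
            card_image_of_injective _ Sum.inr_injective]
      _ = (P.image Sum.inl ∪ T.image Sum.inr).card :=
          (card_union_of_disjoint hdisj).symm
      _ ≤ S.card := card_le_card hsub
  rw [Nat.ceilDiv_eq_add_pred_div]
  rw [Nat.div_le_iff_le_mul_add_pred hk1]
  have key : v + P.card * (k - 1) ≤ k * S.card := by
    have h1 : k * (P.card + T.card) ≤ k * S.card :=
      Nat.mul_le_mul_left k hsplit
    have h2 : v - P.card ≤ k * T.card := hQcard ▸ hcount
    have h3 : P.card * (k - 1) + P.card = P.card * k := by
      have : k - 1 + 1 = k := by omega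
      calc P.card * (k - 1) + P.card = P.card * (k - 1 + 1) := by ring
        _ = P.card * k := by rw [this]
    nlinarith [Nat.sub_add_cancel hPv]
  omega
end

section
/- Let D be a Steiner design (a (v,k,1)-design). Then γ(D) ≥ ⌈2v/k⌉ - 1. -/
open Finset

variable {α ι : Type*}

lemma swap_count [Fintype ι] [DecidableEq α] (B : ι → Finset α)
    (F : Finset ι) (T : Finset α) :
    ∑ i ∈ F, (T.filter (· ∈ B i)).card = ∑ x ∈ T, (F.filter (x ∈ B ·)).card := by
  simp_rw [Finset.card_filter]
  rw [Finset.sum_comm]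

/-- For a Steiner design (a `(v,k,1)`-design),
`γ(D) ≥ ⌈2v/k⌉ - 1`. -/
theorem stmt10 [Fintype α] [Fintype ι] [DecidableEq α]
    (B : ι → Finset α) (v k : ℕ)
    (hv : Fintype.card α = v)
    (hk2 : 2 ≤ k) (hkv : k < v)
    (hblock : ∀ i, (B i).card = k)
    (hpair : ∀ x y : α, x ≠ y →
      (Finset.univ.filter fun i => x ∈ B i ∧ y ∈ B i).card = 1) :
    (2 * v) ⌈/⌉ k - 1 ≤ domNum (incGraph B) := by
  classical
  set G := incGraph B
  -- obtain a minimal dominating set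
  have hne : {n | ∃ S : Finset (α ⊕ ι), IsDomSet G S ∧ S.card = n}.Nonempty :=
    ⟨(Finset.univ : Finset (α ⊕ ι)).card, Finset.univ, fun x hx => (hx (mem_univ x)).elim, rfl⟩
  obtain ⟨S, hS, hScard⟩ := Nat.sInf_mem hne
  set γ := domNum G with hγ
  have hScard : S.card = γ := hScard
  set P : Finset α := S.toLeft with hP
  set Bl : Finset ι := S.toRight with hBl
  set p := P.card with hp
  set b := Bl.card with hb
  have hpb : p + b = γ := by rw [hp, hb, hP, hBl, Finset.card_toLeft_add_card_toRight, hScard]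
  haveI : Nonempty α := by
    rw [← Fintype.card_pos_iff, hv]; omega
  -- domination facts
  have hdomP : ∀ x : α, x ∉ P → ∃ i ∈ Bl, x ∈ B i := by
    intro x hx
    obtain ⟨s, hsS, hadj⟩ := hS (Sum.inl x) (by simpa [hP] using hx)
    rcases hadj with ⟨p', i, hpx, rfl, hmem⟩ | ⟨p', i, hpx, _, _⟩
    · cases hpx; exact ⟨i, by simpa [hBl] using hsS, hmem⟩
    · simp at hpx
  have hdomB : ∀ i : ι, i ∉ Bl → ∃ q ∈ P, q ∈ B i := by
    intro i hi
    obtain ⟨s, hsS, hadj⟩ := hS (Sum.inr i) (by simpa [hBl] using hi)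
    rcases hadj with ⟨p', i', hpx, _, _⟩ | ⟨q, i', hii, rfl, hmem⟩
    · simp at hpx
    · cases hii; exact ⟨q, by simpa [hP] using hsS, hmem⟩
  have hpv : p ≤ v := by rw [hp, ← hv]; exact Finset.card_le_univ P
  -- Fact A : v ≤ p + b * k
  have factA : v ≤ p + b * k := by
    have hsub : (Finset.univ : Finset α) ⊆ P ∪ Bl.biUnion B := by
      intro x _
      by_cases hx : x ∈ P
      · exact mem_union_left _ hx
      · obtain ⟨i, hi, hxi⟩ := hdomP x hx
        exact mem_union_right _ (mem_biUnion.2 ⟨i, hi, hxi⟩)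
    calc v = (Finset.univ : Finset α).card := hv.symm
      _ ≤ (P ∪ Bl.biUnion B).card := Finset.card_le_card hsub
      _ ≤ P.card + (Bl.biUnion B).card := Finset.card_union_le _ _
      _ ≤ p + ∑ i ∈ Bl, (B i).card := by
          exact Nat.add_le_add le_rfl (Finset.card_biUnion_le)
      _ = p + b * k := by simp [hblock, hb, mul_comm]
  -- replication number: for each x, (# blocks through x) * (k-1) = v - 1
  have hrep : ∀ x : α, (Finset.univ.filter (fun i => x ∈ B i)).card * (k - 1) = v - 1 := by
    intro x
    have h1 : ∑ i ∈ Finset.univ.filter (fun i => x ∈ B i),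
        ((Finset.univ.erase x).filter (· ∈ B i)).card
        = ∑ y ∈ Finset.univ.erase x,
            ((Finset.univ.filter (fun i => x ∈ B i)).filter (y ∈ B ·)).card :=
      swap_count B _ _
    have h2 : ∀ i ∈ Finset.univ.filter (fun i => x ∈ B i),
        ((Finset.univ.erase x).filter (· ∈ B i)).card = k - 1 := by
      intro i hi
      have hxi : x ∈ B i := (mem_filter.1 hi).2
      have : (Finset.univ.erase x).filter (· ∈ B i) = (B i).erase x := by
        ext y; simp [and_comm]
      rw [this, Finset.card_erase_of_mem hxi, hblock]
    have h3 : ∀ y ∈ Finset.univ.erase x,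
        ((Finset.univ.filter (fun i => x ∈ B i)).filter (y ∈ B ·)).card = 1 := by
      intro y hy
      have hyx : y ≠ x := (Finset.mem_erase.1 hy).1
      have : (Finset.univ.filter (fun i => x ∈ B i)).filter (y ∈ B ·)
          = Finset.univ.filter (fun i => x ∈ B i ∧ y ∈ B i) := by
        ext i; simp [and_assoc]
      rw [this]; exact hpair x y hyx.symm
    rw [Finset.sum_congr rfl h2, Finset.sum_congr rfl h3] at h1
    simp only [Finset.sum_const, smul_eq_mul, mul_one] at h1
    rw [h1, Finset.card_erase_of_mem (mem_univ x), Finset.card_univ, hv]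
  -- key: for x ∉ P, # blocks through x ≤ (# blocks of Bl through x) + p
  have hkey : ∀ x : α, x ∉ P →
      (Finset.univ.filter (fun i => x ∈ B i)).card ≤ (Bl.filter (x ∈ B ·)).card + p := by
    intro x hx
    set F := Finset.univ.filter (fun i => x ∈ B i) with hF
    have hsplit : (F.filter (· ∈ Bl)).card + (F.filter (· ∉ Bl)).card = F.card :=
      Finset.card_filter_add_card_filter_not _
    have heq : F.filter (· ∈ Bl) = Bl.filter (x ∈ B ·) := by
      ext i; simp [hF, and_comm]
    -- injection from F.filter (· ∉ Bl) into P
    have hinj : (F.filter (· ∉ Bl)).card ≤ p := by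
      set f : ι → α := fun i =>
        if h : ∃ q ∈ P, q ∈ B i then h.choose else Classical.arbitrary α with hf
      apply Finset.card_le_card_of_injOn f
      · intro i hi
        have hiBl : i ∉ Bl := (mem_filter.1 hi).2
        have h := hdomB i hiBl
        simp only [hf, dif_pos h]
        exact h.choose_spec.1
      · intro i hi i' hi' hff
        simp only [Finset.coe_filter, Set.mem_setOf_eq] at hi hi'
        have hiBl := hi.2
        have hi'Bl := hi'.2
        have hxi : x ∈ B i := (mem_filter.1 hi.1).2
        have hxi' : x ∈ B i' := (mem_filter.1 hi'.1).2
        have h := hdomB i hiBl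
        have h' := hdomB i' hi'Bl
        have hfi : f i = h.choose := by simp only [hf, dif_pos h]
        have hfi' : f i' = h'.choose := by simp only [hf, dif_pos h']
        set q := h.choose with hq
        have hqP : q ∈ P := h.choose_spec.1
        have hqB : q ∈ B i := h.choose_spec.2
        have hqB' : q ∈ B i' := by
          rw [hfi, hfi'] at hff
          rw [hff]; exact h'.choose_spec.2
        have hxq : x ≠ q := fun hxq => hx (hxq ▸ hqP)
        have := hpair x q hxq
        have hone := Finset.card_le_one.1 (le_of_eq this)
        exact hone i (by simp [hxi, hqB]) i' (by simp [hxi', hqB'])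
    rw [← hsplit, heq]
    omega
  -- final arithmetic: show 2 * v ≤ k * (γ + 1)
  have hmain : 2 * v ≤ k * (γ + 1) := by
    by_cases hcase : v + p ≤ p * k + k
    · -- case 1
      nlinarith [factA, hpb]
    · -- case 2 : every x ∉ P lies in ≥ 2 blocks of Bl
      push_neg at hcase
      have h2blocks : ∀ x : α, x ∉ P → 2 ≤ (Bl.filter (x ∈ B ·)).card := by
        intro x hx
        have h1 := hkey x hx
        have h2 := hrep x
        by_contra hlt
        push_neg at hlt
        have hR : (Finset.univ.filter (fun i => x ∈ B i)).card ≤ p + 1 := by omega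
        have hm : v - 1 ≤ (p + 1) * (k - 1) := h2 ▸ Nat.mul_le_mul_right _ hR
        have he : (p + 1) * (k - 1) + (p + 1) = p * k + k := by
          have hk1 : k - 1 + 1 = k := by omega
          calc (p + 1) * (k - 1) + (p + 1) = (p + 1) * ((k - 1) + 1) := by ring
            _ = (p + 1) * k := by rw [hk1]
            _ = p * k + k := by ring
        have hv1 : v - 1 + 1 = v := by omega
        linarith
      -- count incidences between (univ \ P) and Bl
      have hcount : ∑ i ∈ Bl, ((Finset.univ \ P).filter (· ∈ B i)).card
          = ∑ x ∈ Finset.univ \ P, (Bl.filter (x ∈ B ·)).card := swap_count B _ _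
      have hub : ∑ i ∈ Bl, ((Finset.univ \ P).filter (· ∈ B i)).card ≤ b * k := by
        calc ∑ i ∈ Bl, ((Finset.univ \ P).filter (· ∈ B i)).card
            ≤ ∑ i ∈ Bl, (B i).card := by
              apply Finset.sum_le_sum
              intro i _
              exact Finset.card_le_card (fun y hy => (mem_filter.1 hy).2)
          _ = b * k := by simp [hblock, hb, mul_comm]
      have hlb : 2 * (v - p) ≤ ∑ x ∈ Finset.univ \ P, (Bl.filter (x ∈ B ·)).card := by
        have hc : (Finset.univ \ P).card = v - p := by
          rw [Finset.card_sdiff_of_subset (Finset.subset_univ P), Finset.card_univ, hv, hp]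
        calc 2 * (v - p) = ∑ _x ∈ Finset.univ \ P, 2 := by
              rw [Finset.sum_const, hc, smul_eq_mul, mul_comm]
          _ ≤ _ := Finset.sum_le_sum (fun x hx => h2blocks x (Finset.mem_sdiff.1 hx).2)
      have hfin : 2 * (v - p) ≤ b * k := by omega
      have : 2 * v ≤ 2 * p + b * k := by omega
      nlinarith [hpb]
  -- conclude
  have hk0 : 0 < k := by omega
  have h1 : (2 * v) ⌈/⌉ k ≤ γ + 1 := by
    rw [ceilDiv_le_iff_le_mul hk0]
    linarith [hmain]
  omega
end

section
/- Let Π be a finite projective plane of order q ≥ 2, i.e., a (q²+q+1, q+1, 1)-design. Then γ(Π) = 2q. -/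
set_option linter.unusedSectionVars false


open Finset

variable {α ι : Type*}

section Aux
variable [Fintype α] [Fintype ι] [DecidableEq α] {B : ι → Finset α} {q : ℕ}

lemma aux_unique
    (hpair : ∀ x y : α, x ≠ y → (univ.filter fun i => x ∈ B i ∧ y ∈ B i).card = 1)
    {x y : α} (hxy : x ≠ y) {i j : ι} (hxi : x ∈ B i) (hyi : y ∈ B i)
    (hxj : x ∈ B j) (hyj : y ∈ B j) : i = j := by
  have h := hpair x y hxy
  rw [card_eq_one] at h
  obtain ⟨k, hk⟩ := h
  have hi : i ∈ univ.filter fun i => x ∈ B i ∧ y ∈ B i := by simp [hxi, hyi]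
  have hj : j ∈ univ.filter fun i => x ∈ B i ∧ y ∈ B i := by simp [hxj, hyj]
  rw [hk, mem_singleton] at hi hj
  rw [hi, hj]

lemma aux_exists
    (hpair : ∀ x y : α, x ≠ y → (univ.filter fun i => x ∈ B i ∧ y ∈ B i).card = 1)
    {x y : α} (hxy : x ≠ y) : ∃ i, x ∈ B i ∧ y ∈ B i := by
  have h := hpair x y hxy
  have : (univ.filter fun i => x ∈ B i ∧ y ∈ B i).Nonempty := by
    rw [← card_pos, h]; norm_num
  obtain ⟨i, hi⟩ := this
  simp only [mem_filter] at hi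
  exact ⟨i, hi.2⟩

/-- each point is on exactly q+1 lines -/
lemma lines_through (hq : 2 ≤ q)
    (hv : Fintype.card α = q ^ 2 + q + 1)
    (hblock : ∀ i, (B i).card = q + 1)
    (hpair : ∀ x y : α, x ≠ y → (univ.filter fun i => x ∈ B i ∧ y ∈ B i).card = 1)
    (x : α) : (univ.filter fun i => x ∈ B i).card = q + 1 := by
  classical
  set T : Finset (ι × α) :=
    univ.filter (fun p => x ∈ B p.1 ∧ p.2 ∈ B p.1 ∧ p.2 ≠ x) with hT
  have h1 : T.card = ∑ i ∈ univ.filter (fun i => x ∈ B i), ((B i).erase x).card := by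
    rw [card_eq_sum_card_fiberwise (f := Prod.fst)
      (t := univ.filter (fun i => x ∈ B i))]
    · refine Finset.sum_congr rfl fun i hi => ?_
      simp only [mem_filter, mem_univ, true_and] at hi
      have : T.filter (fun p => p.1 = i) = ((B i).erase x).image (fun y => (i, y)) := by
        ext ⟨j, y⟩
        simp only [hT, mem_filter, mem_univ, true_and, mem_image, mem_erase, Prod.mk.injEq]
        constructor
        · rintro ⟨⟨h1, h2, h3⟩, rfl⟩; exact ⟨y, ⟨h3, h2⟩, rfl, rfl⟩
        · rintro ⟨z, ⟨hz1, hz2⟩, rfl, rfl⟩; exact ⟨⟨hi, hz2, hz1⟩, rfl⟩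
      rw [this, card_image_of_injective _ (fun a b h => by simpa using h)]
    · rintro ⟨i, y⟩ hp
      change (i, y) ∈ T at hp
      simp only [hT, mem_filter, mem_univ, true_and, mem_coe] at hp ⊢
      exact hp.1
  have h2 : T.card = ∑ y ∈ univ.erase x, (univ.filter fun i => x ∈ B i ∧ y ∈ B i).card := by
    rw [card_eq_sum_card_fiberwise (f := Prod.snd) (t := univ.erase x)]
    · refine Finset.sum_congr rfl fun y hy => ?_
      have : T.filter (fun p => p.2 = y)
          = (univ.filter fun i => x ∈ B i ∧ y ∈ B i).image (fun i => (i, y)) := by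
        ext ⟨j, z⟩
        simp only [hT, mem_filter, mem_univ, true_and, mem_image, Prod.mk.injEq]
        constructor
        · rintro ⟨⟨h1, h2, h3⟩, rfl⟩; exact ⟨j, ⟨h1, h2⟩, rfl, rfl⟩
        · rintro ⟨i, ⟨hi1, hi2⟩, rfl, rfl⟩
          simp only [mem_erase, mem_univ, and_true] at hy
          exact ⟨⟨hi1, hi2, hy⟩, rfl⟩
      rw [this, card_image_of_injective _ (fun a b h => by simpa using h)]
    · rintro ⟨i, y⟩ hp
      change (i, y) ∈ T at hp
      simp only [hT, mem_filter, mem_univ, true_and, mem_erase, and_true, mem_coe] at hp ⊢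
      exact hp.2.2
  have e1 : T.card = (univ.filter fun i => x ∈ B i).card * q := by
    rw [h1, Finset.sum_congr rfl (fun i hi => show ((B i).erase x).card = q by
      simp only [mem_filter, mem_univ, true_and] at hi
      rw [card_erase_of_mem hi, hblock]; omega),
      Finset.sum_const, smul_eq_mul]
  have e2 : T.card = q ^ 2 + q := by
    rw [h2, Finset.sum_congr rfl (fun y hy => hpair x y (by
      simp only [mem_erase, mem_univ, and_true] at hy; exact Ne.symm hy)),
      Finset.sum_const, smul_eq_mul, mul_one, card_erase_of_mem (mem_univ x),
      Finset.card_univ, hv]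
    omega
  have : (univ.filter fun i => x ∈ B i).card * q = (q + 1) * q := by
    rw [← e1, e2]; ring
  exact Nat.eq_of_mul_eq_mul_right (by omega) this

variable [Fintype α] [Fintype ι] [DecidableEq α] {B : ι → Finset α} {q : ℕ}

lemma card_lines (hblock : ∀ i, (B i).card = q + 1)
    (hlt : ∀ x : α, (univ.filter fun i => x ∈ B i).card = q + 1) :
    Fintype.card ι = Fintype.card α := by
  classical
  set T : Finset (ι × α) := univ.filter (fun p => p.2 ∈ B p.1) with hT
  have h1 : T.card = Fintype.card ι * (q + 1) := by
    rw [card_eq_sum_card_fiberwise (f := Prod.fst) (t := univ) (fun _ _ => mem_univ _)]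
    rw [Finset.sum_congr rfl (fun i _ => show (T.filter fun p => p.1 = i).card = q + 1 by
      have : T.filter (fun p => p.1 = i) = (B i).image (fun y => (i, y)) := by
        ext ⟨j, y⟩
        simp only [hT, mem_filter, mem_univ, true_and, mem_image, Prod.mk.injEq]
        constructor
        · rintro ⟨h2, rfl⟩; exact ⟨y, h2, rfl, rfl⟩
        · rintro ⟨z, hz, rfl, rfl⟩; exact ⟨hz, rfl⟩
      rw [this, card_image_of_injective _ (fun a b h => by simpa using h), hblock]),
      Finset.sum_const, smul_eq_mul, Finset.card_univ]
  have h2 : T.card = Fintype.card α * (q + 1) := by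
    rw [card_eq_sum_card_fiberwise (f := Prod.snd) (t := univ) (fun _ _ => mem_univ _)]
    rw [Finset.sum_congr rfl (fun y _ => show (T.filter fun p => p.2 = y).card = q + 1 by
      have : T.filter (fun p => p.2 = y) = (univ.filter fun i => y ∈ B i).image (fun i => (i, y)) := by
        ext ⟨j, z⟩
        simp only [hT, mem_filter, mem_univ, true_and, mem_image, Prod.mk.injEq]
        constructor
        · rintro ⟨h2, rfl⟩; exact ⟨j, h2, rfl, rfl⟩
        · rintro ⟨i, hi, rfl, rfl⟩; exact ⟨hi, rfl⟩
      rw [this, card_image_of_injective _ (fun a b h => by simpa using h), hlt]),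
      Finset.sum_const, smul_eq_mul, Finset.card_univ]
  have := h1.symm.trans h2
  exact Nat.eq_of_mul_eq_mul_right (by omega) this

lemma blocks_ne (hq : 2 ≤ q) (hblock : ∀ i, (B i).card = q + 1)
    (hpair : ∀ x y : α, x ≠ y → (univ.filter fun i => x ∈ B i ∧ y ∈ B i).card = 1)
    {i j : ι} (hij : i ≠ j) : B i ≠ B j := by
  intro h
  have : 2 ≤ (B i).card := by rw [hblock]; omega
  obtain ⟨x, hx, y, hy, hxy⟩ := Finset.one_lt_card.mp this
  have := hpair x y hxy
  have hi : i ∈ univ.filter fun k => x ∈ B k ∧ y ∈ B k := by simp [hx, hy]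
  have hj : j ∈ univ.filter fun k => x ∈ B k ∧ y ∈ B k := by
    simp [← h, hx, hy]
  have := Finset.one_lt_card.mpr ⟨i, hi, j, hj, hij⟩
  omega

/-- Any two distinct blocks meet, and indeed any block through a point `y ∉ B l`
meets `B l`. -/
lemma block_meets (hq : 2 ≤ q) (hblock : ∀ i, (B i).card = q + 1)
    (hlt : ∀ x : α, (univ.filter fun i => x ∈ B i).card = q + 1)
    (hpair : ∀ x y : α, x ≠ y → (univ.filter fun i => x ∈ B i ∧ y ∈ B i).card = 1)
    {l m : ι} {y : α} (hy : y ∈ B m) (hyl : y ∉ B l) :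
    ∃ z ∈ B l, z ∈ B m := by
  classical
  -- map each z ∈ B l to the line through y and z
  have hex : ∀ z ∈ B l, ∃ i, y ∈ B i ∧ z ∈ B i := by
    intro z hz
    have hyz : y ≠ z := fun h => hyl (h ▸ hz)
    obtain ⟨i, hi⟩ : ∃ i, y ∈ B i ∧ z ∈ B i := by
      have h := hpair y z hyz
      have : (univ.filter fun i => y ∈ B i ∧ z ∈ B i).Nonempty := by
        rw [← card_pos, h]; norm_num
      obtain ⟨i, hi⟩ := this
      simp only [mem_filter] at hi
      exact ⟨i, hi.2⟩
    exact ⟨i, hi⟩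
  choose f hf using hex
  have hinj : ∀ z1 (h1 : z1 ∈ B l), ∀ z2 (h2 : z2 ∈ B l), f z1 h1 = f z2 h2 → z1 = z2 := by
    intro z1 h1 z2 h2 he
    by_contra hne
    -- z1, z2 both in B (f z1 h1) and in B l
    have hu : f z1 h1 = l := by
      refine aux_unique hpair hne (hf z1 h1).2 (he ▸ (hf z2 h2).2) h1 h2
    exact hyl (hu ▸ (hf z1 h1).1)
  -- image of B l under f is all of the lines through y
  have himg : (B l).attach.image (fun z => f z.1 z.2) = univ.filter (fun i => y ∈ B i) := by
    apply Finset.eq_of_subset_of_card_le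
    · intro i hi
      simp only [mem_image, mem_attach, true_and, Subtype.exists] at hi
      obtain ⟨z, hz, rfl⟩ := hi
      simp [(hf z hz).1]
    · rw [hlt, Finset.card_image_of_injective _ ?_, Finset.card_attach, hblock]
      rintro ⟨z1, h1⟩ ⟨z2, h2⟩ he
      exact Subtype.ext (hinj z1 h1 z2 h2 he)
  have hm : m ∈ (B l).attach.image (fun z => f z.1 z.2) := by
    rw [himg]; simp [hy]
  simp only [mem_image, mem_attach, true_and, Subtype.exists] at hm
  obtain ⟨z, hz, he⟩ := hm
  exact ⟨z, hz, he ▸ (hf z hz).2⟩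

end Aux

section LB
variable [Fintype α] [Fintype ι] [DecidableEq α] {B : ι → Finset α} {q : ℕ}

lemma dom_lower (hq : 2 ≤ q)
    (hv : Fintype.card α = q ^ 2 + q + 1)
    (hblock : ∀ i, (B i).card = q + 1)
    (hlt : ∀ x : α, (univ.filter fun i => x ∈ B i).card = q + 1)
    (hcι : Fintype.card ι = q ^ 2 + q + 1)
    (S : Finset (α ⊕ ι)) (hS : IsDomSet (incGraph B) S) : 2 * q ≤ S.card := by
  classical
  set P : Finset α := univ.filter fun x => Sum.inl x ∈ S with hP
  set L : Finset ι := univ.filter fun i => Sum.inr i ∈ S with hL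
  have hcards : P.card + L.card ≤ S.card := by
    have hsub : P.map ⟨Sum.inl, Sum.inl_injective⟩ ∪ L.map ⟨Sum.inr, Sum.inr_injective⟩ ⊆ S := by
      intro v hv
      rcases mem_union.mp hv with h | h <;>
        · simp only [mem_map, Function.Embedding.coeFn_mk, hP, hL, mem_filter, mem_univ,
            true_and] at h
          obtain ⟨x, hx, rfl⟩ := h
          exact hx
    have hdisj : Disjoint (P.map ⟨Sum.inl, Sum.inl_injective⟩)
        (L.map ⟨Sum.inr, Sum.inr_injective⟩) := by
      rw [Finset.disjoint_left]
      rintro v hv1 hv2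
      simp only [mem_map, Function.Embedding.coeFn_mk] at hv1 hv2
      obtain ⟨x, -, rfl⟩ := hv1
      obtain ⟨i, -, h⟩ := hv2
      exact absurd h (by simp)
    calc P.card + L.card
        = (P.map ⟨Sum.inl, Sum.inl_injective⟩ ∪ L.map ⟨Sum.inr, Sum.inr_injective⟩).card := by
          rw [card_union_of_disjoint hdisj, card_map, card_map]
      _ ≤ S.card := card_le_card hsub
  have hpts : q ^ 2 + q + 1 ≤ P.card + L.card * (q + 1) := by
    have hcover : (univ : Finset α) ⊆ P ∪ L.biUnion B := by
      intro x _
      by_cases hx : Sum.inl x ∈ S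
      · exact mem_union_left _ (by simp [hP, hx])
      · obtain ⟨s, hs, hadj⟩ := hS _ hx
        rcases hadj with ⟨p, i, hpe, rfl, hmem⟩ | ⟨p, i, hpe, heq, hmem⟩
        · cases hpe
          exact mem_union_right _ (mem_biUnion.mpr ⟨i, by simp [hL, hs], hmem⟩)
        · exact absurd hpe (by simp)
    calc q ^ 2 + q + 1 = (univ : Finset α).card := by rw [card_univ, hv]
      _ ≤ (P ∪ L.biUnion B).card := card_le_card hcover
      _ ≤ P.card + (L.biUnion B).card := card_union_le _ _
      _ ≤ P.card + ∑ i ∈ L, (B i).card := by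
          exact Nat.add_le_add_left (card_biUnion_le) _
      _ = P.card + L.card * (q + 1) := by
          rw [Finset.sum_congr rfl fun i _ => hblock i, Finset.sum_const, smul_eq_mul]
  have hlns : q ^ 2 + q + 1 ≤ L.card + P.card * (q + 1) := by
    have hcover : (univ : Finset ι) ⊆ L ∪ P.biUnion (fun x => univ.filter fun i => x ∈ B i) := by
      intro m _
      by_cases hm : Sum.inr m ∈ S
      · exact mem_union_left _ (by simp [hL, hm])
      · obtain ⟨s, hs, hadj⟩ := hS _ hm
        rcases hadj with ⟨p, i, hpe, heq, hmem⟩ | ⟨p, i, hpe, rfl, hmem⟩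
        · exact absurd hpe (by simp)
        · cases hpe
          exact mem_union_right _ (mem_biUnion.mpr ⟨p, by simp [hP, hs], by simp [hmem]⟩)
    calc q ^ 2 + q + 1 = (univ : Finset ι).card := by rw [card_univ, hcι]
      _ ≤ (L ∪ P.biUnion _).card := card_le_card hcover
      _ ≤ L.card + (P.biUnion _).card := card_union_le _ _
      _ ≤ L.card + ∑ x ∈ P, (univ.filter fun i => x ∈ B i).card :=
          Nat.add_le_add_left (card_biUnion_le) _
      _ = L.card + P.card * (q + 1) := by
          rw [Finset.sum_congr rfl fun x _ => hlt x, Finset.sum_const, smul_eq_mul]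
  have harith : 2 * q ≤ P.card + L.card := by
    rcases le_or_gt q L.card with hb | hb
    · rcases le_or_gt q P.card with ha | ha
      · omega
      · have h : (P.card + 1) * q ≤ q * q := Nat.mul_le_mul_right q ha
        nlinarith [hlns, h]
    · have h : (L.card + 1) * q ≤ q * q := Nat.mul_le_mul_right q hb
      nlinarith [hpts, h]
  omega

end LB
section UB
variable [Fintype α] [Fintype ι] [DecidableEq α] {B : ι → Finset α} {q : ℕ}

lemma dom_upper (hq : 2 ≤ q)
    (hv : Fintype.card α = q ^ 2 + q + 1)
    (hblock : ∀ i, (B i).card = q + 1)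
    (hlt : ∀ x : α, (univ.filter fun i => x ∈ B i).card = q + 1)
    (hpair : ∀ x y : α, x ≠ y → (univ.filter fun i => x ∈ B i ∧ y ∈ B i).card = 1) :
    ∃ S : Finset (α ⊕ ι), IsDomSet (incGraph B) S ∧ S.card = 2 * q := by
  classical
  -- pick an incident point-line pair (p, l)
  obtain ⟨x0, y0, hxy0⟩ := Fintype.exists_pair_of_one_lt_card (by omega : 1 < Fintype.card α)
  obtain ⟨l, hpl, -⟩ := aux_exists hpair hxy0
  set p := x0
  set Pts : Finset α := (B l).erase p with hPts
  set Lns : Finset ι := (univ.filter fun i => p ∈ B i).erase l with hLns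
  set S : Finset (α ⊕ ι) :=
    Pts.map ⟨Sum.inl, Sum.inl_injective⟩ ∪ Lns.map ⟨Sum.inr, Sum.inr_injective⟩ with hS
  have hmemS_inl : ∀ x : α, Sum.inl x ∈ S ↔ x ∈ Pts := by
    intro x; simp [hS]
  have hmemS_inr : ∀ i : ι, Sum.inr i ∈ S ↔ i ∈ Lns := by
    intro i; simp [hS]
  refine ⟨S, ?_, ?_⟩
  · rintro (x | m) hv'
    · -- a point not in S
      rw [hmemS_inl] at hv'
      by_cases hx : x = p
      · -- p itself: any line of Lns through p works
        have hne : Lns.Nonempty := by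
          rw [← card_pos, hLns, card_erase_of_mem (by simp [hpl]), hlt]
          omega
        obtain ⟨i, hi⟩ := hne
        have hpi : p ∈ B i := by
          have := (mem_erase.mp hi).2
          simp only [mem_filter, mem_univ, true_and] at this
          exact this
        exact ⟨Sum.inr i, (hmemS_inr i).mpr hi, Or.inl ⟨x, i, rfl, rfl, hx ▸ hpi⟩⟩
      · have hxl : x ∉ B l := fun h => hv' (mem_erase.mpr ⟨hx, h⟩)
        obtain ⟨i, hxi, hpi⟩ := aux_exists hpair (hx : x ≠ p)
        have hil : i ≠ l := fun h => hxl (h ▸ hxi)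
        have hiL : i ∈ Lns := mem_erase.mpr ⟨hil, by simp [hpi]⟩
        exact ⟨Sum.inr i, (hmemS_inr i).mpr hiL, Or.inl ⟨x, i, rfl, rfl, hxi⟩⟩
    · -- a line not in S
      rw [hmemS_inr] at hv'
      by_cases hm : m = l
      · have hne : Pts.Nonempty := by
          rw [← card_pos, hPts, card_erase_of_mem hpl, hblock]; omega
        obtain ⟨z, hz⟩ := hne
        exact ⟨Sum.inl z, (hmemS_inl z).mpr hz,
          Or.inr ⟨z, m, rfl, rfl, hm ▸ (mem_erase.mp hz).2⟩⟩
      · have hpm : p ∉ B m := by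
          intro h
          exact hv' (mem_erase.mpr ⟨hm, by simp [h]⟩)
        -- find y ∈ B m \ B l
        have hne : B m ≠ B l := blocks_ne hq hblock hpair hm
        have hnsub : ¬ B m ⊆ B l := fun h =>
          hne (Finset.eq_of_subset_of_card_le h (by rw [hblock, hblock]))
        obtain ⟨y, hym, hyl⟩ := Finset.not_subset.mp hnsub
        obtain ⟨z, hzl, hzm⟩ := block_meets hq hblock hlt hpair hym hyl
        have hzp : z ≠ p := fun h => hpm (h ▸ hzm)
        exact ⟨Sum.inl z, (hmemS_inl z).mpr (mem_erase.mpr ⟨hzp, hzl⟩),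
          Or.inr ⟨z, m, rfl, rfl, hzm⟩⟩
  · have hdisj : Disjoint (Pts.map ⟨Sum.inl, Sum.inl_injective⟩)
        (Lns.map ⟨Sum.inr, Sum.inr_injective⟩) := by
      rw [Finset.disjoint_left]
      rintro v hv1 hv2
      simp only [mem_map, Function.Embedding.coeFn_mk] at hv1 hv2
      obtain ⟨x, -, rfl⟩ := hv1
      obtain ⟨i, -, h⟩ := hv2
      exact absurd h (by simp)
    rw [hS, card_union_of_disjoint hdisj, card_map, card_map, hPts, hLns,
      card_erase_of_mem hpl, card_erase_of_mem (by simp [hpl]), hblock, hlt]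
    omega

end UB


/-- A finite projective plane of order `q ≥ 2`, i.e. a
`(q²+q+1, q+1, 1)`-design, has domination number exactly `2q`. -/
theorem stmt11 [Fintype α] [Fintype ι] [DecidableEq α]
    (B : ι → Finset α) (q : ℕ) (hq : 2 ≤ q)
    (hv : Fintype.card α = q ^ 2 + q + 1)
    (hblock : ∀ i, (B i).card = q + 1)
    (hpair : ∀ x y : α, x ≠ y →
      (Finset.univ.filter fun i => x ∈ B i ∧ y ∈ B i).card = 1) :
    domNum (incGraph B) = 2 * q := by
  classical
  have hlt := fun x => lines_through hq hv hblock hpair x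
  have hcι : Fintype.card ι = q ^ 2 + q + 1 := (card_lines hblock hlt).trans hv
  obtain ⟨S, hdom, hcard⟩ := dom_upper hq hv hblock hlt hpair
  refine le_antisymm (Nat.sInf_le ⟨S, hdom, hcard⟩) ?_
  refine le_csInf ⟨2 * q, S, hdom, hcard⟩ ?_
  rintro n ⟨S', hS', rfl⟩
  exact dom_lower hq hv hblock hlt hcι S' hS'
end

section
/- Let D be a (v,k,λ)-design. Then D is neat if and only if γ(G_D) = i(G_D), where i(G_D) is the independent domination number of the incidence graph. -/
open Finset

variable {α ι : Type*}

/-- The independent domination number of a graph: the minimum size of a set of vertices that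
is both independent and dominating. -/
noncomputable def indDomNum {V : Type*} (G : SimpleGraph V) : ℕ :=
  sInf {n | ∃ S : Finset V, IsDomSet G S ∧ (∀ a ∈ S, ∀ b ∈ S, ¬ G.Adj a b) ∧ S.card = n}

lemma mem_neatSet [Fintype ι] [DecidableEq α] [DecidableEq ι]
    (B : ι → Finset α) (P : Finset α) (x : α ⊕ ι) :
    x ∈ neatSet B P ↔
      (∃ p ∈ P, x = Sum.inl p) ∨ (∃ i, (∀ p ∈ P, p ∉ B i) ∧ x = Sum.inr i) := by
  simp [neatSet, eq_comm]

lemma neat_indep [Fintype ι] [DecidableEq α] [DecidableEq ι]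
    (B : ι → Finset α) (P : Finset α) :
    ∀ a ∈ neatSet B P, ∀ b ∈ neatSet B P, ¬ (incGraph B).Adj a b := by
  intro a ha b hb hadj
  rw [mem_neatSet] at ha hb
  rcases hadj with ⟨p, i, rfl, rfl, hpi⟩ | ⟨p, i, rfl, rfl, hpi⟩
  · rcases ha with ⟨q, hq, h⟩ | ⟨j, hj, h⟩
    · obtain rfl : p = q := Sum.inl.inj h
      rcases hb with ⟨q', _, h'⟩ | ⟨j, hj, h'⟩
      · exact nomatch h'
      · obtain rfl : i = j := Sum.inr.inj h'
        exact hj p hq hpi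
    · exact nomatch h
  · rcases ha with ⟨q, hq, h⟩ | ⟨j, hj, h⟩
    · exact nomatch h
    · obtain rfl : i = j := Sum.inr.inj h
      rcases hb with ⟨q, hq, h'⟩ | ⟨j', _, h'⟩
      · obtain rfl : p = q := Sum.inl.inj h'
        exact hj p hq hpi
      · exact nomatch h'

/-- A `(v,k,λ)`-design `D` is neat (it has a dominating set of the form
`I_P` of cardinality `γ(D)`) if and only if `γ(G_D) = i(G_D)`, where `i` is the
independent domination number. -/
theorem stmt12 [Fintype α] [Fintype ι] [DecidableEq α] [DecidableEq ι]
    (B : ι → Finset α) (v k l : ℕ)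
    (hv : Fintype.card α = v)
    (hk2 : 2 ≤ k) (hkv : k < v) (hl : 1 ≤ l)
    (hblock : ∀ i, (B i).card = k)
    (hpair : ∀ x y : α, x ≠ y →
      (Finset.univ.filter fun i => x ∈ B i ∧ y ∈ B i).card = l) :
    (∃ P : Finset α, IsDomSet (incGraph B) (neatSet B P) ∧
        (neatSet B P).card = domNum (incGraph B))
      ↔ domNum (incGraph B) = indDomNum (incGraph B) := by
  have hne : ({n | ∃ S : Finset (α ⊕ ι), IsDomSet (incGraph B) S ∧
      (∀ a ∈ S, ∀ b ∈ S, ¬ (incGraph B).Adj a b) ∧ S.card = n} : Set ℕ).Nonempty := by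
    refine ⟨(neatSet B (univ : Finset α)).card, neatSet B univ, ?_, neat_indep B univ, rfl⟩
    intro w hw
    match w with
    | Sum.inl p =>
      exact absurd ((mem_neatSet B univ _).mpr (Or.inl ⟨p, mem_univ p, rfl⟩)) hw
    | Sum.inr i =>
      obtain ⟨p, hp⟩ := Finset.card_pos.mp (by rw [hblock i]; omega)
      exact ⟨Sum.inl p, (mem_neatSet B univ _).mpr (Or.inl ⟨p, mem_univ p, rfl⟩),
        Or.inr ⟨p, i, rfl, rfl, hp⟩⟩
  have hγi : domNum (incGraph B) ≤ indDomNum (incGraph B) := by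
    obtain ⟨S, hdom, hind, hcard⟩ := Nat.sInf_mem hne
    exact Nat.sInf_le ⟨S, hdom, hcard⟩
  constructor
  · rintro ⟨P, hdom, hcard⟩
    refine le_antisymm hγi ?_
    rw [← hcard]
    exact Nat.sInf_le ⟨neatSet B P, hdom, neat_indep B P, rfl⟩
  · intro heq
    obtain ⟨S, hdom, hind, hcard⟩ := Nat.sInf_mem hne
    set P : Finset α := univ.filter (fun p => Sum.inl p ∈ S) with hP
    have hSP : neatSet B P = S := by
      ext x
      rw [mem_neatSet]
      constructor
      · rintro (⟨p, hp, rfl⟩ | ⟨i, hi, rfl⟩)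
        · exact (mem_filter.mp hp).2
        · by_contra hiS
          obtain ⟨s, hsS, hadj⟩ := hdom _ hiS
          rcases hadj with ⟨p, j, h1, h2, hpB⟩ | ⟨p, j, h1, rfl, hpB⟩
          · exact nomatch h1
          · obtain rfl : i = j := Sum.inr.inj h1
            exact hi p (mem_filter.mpr ⟨mem_univ p, hsS⟩) hpB
      · intro hxS
        match x with
        | Sum.inl p => exact Or.inl ⟨p, mem_filter.mpr ⟨mem_univ p, hxS⟩, rfl⟩
        | Sum.inr i =>
          refine Or.inr ⟨i, ?_, rfl⟩
          intro p hp hpB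
          exact hind _ hxS _ (mem_filter.mp hp).2 (Or.inr ⟨p, i, rfl, rfl, hpB⟩)
    exact ⟨P, by rw [hSP]; exact hdom, by rw [hSP, hcard]; exact heq.symm⟩
end

section
/- Let D be a Steiner triple system on v points (a (v,3,1)-design). Then γ(D) ≥ ⌈2v/3⌉ - 1. -/
open Finset

variable {α ι : Type*}

lemma sts_count_pairs [Fintype ι] [DecidableEq α] (B : ι → Finset α)
    (hpair : ∀ x y : α, x ≠ y →
      (Finset.univ.filter fun i => x ∈ B i ∧ y ∈ B i).card = 1)
    (Q : Finset α) :
    ∑ i : ι, ((B i ∩ Q).offDiag).card = Q.card * Q.card - Q.card := by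
  calc ∑ i : ι, ((B i ∩ Q).offDiag).card
      = ∑ i : ι, ∑ z ∈ Q.offDiag, if z.1 ∈ B i ∧ z.2 ∈ B i then 1 else 0 := by
        refine Finset.sum_congr rfl fun i _ => ?_
        rw [← Finset.card_filter]
        congr 1
        ext z
        simp only [Finset.mem_offDiag, Finset.mem_filter, Finset.mem_inter]
        tauto
    _ = ∑ z ∈ Q.offDiag, ∑ i : ι, if z.1 ∈ B i ∧ z.2 ∈ B i then 1 else 0 :=
        Finset.sum_comm
    _ = ∑ z ∈ Q.offDiag, 1 := by
        refine Finset.sum_congr rfl fun z hz => ?_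
        rw [← Finset.card_filter]
        exact hpair z.1 z.2 (Finset.mem_offDiag.mp hz).2.2
    _ = Q.offDiag.card := by simp
    _ = Q.card * Q.card - Q.card := by rw [Finset.offDiag_card]

lemma sts_count_cross [Fintype α] [Fintype ι] [DecidableEq α] (B : ι → Finset α)
    (hpair : ∀ x y : α, x ≠ y →
      (Finset.univ.filter fun i => x ∈ B i ∧ y ∈ B i).card = 1)
    (P : Finset α) :
    ∑ i : ι, (B i ∩ P).card * (B i ∩ Pᶜ).card = P.card * Pᶜ.card := by
  calc ∑ i : ι, (B i ∩ P).card * (B i ∩ Pᶜ).card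
      = ∑ i : ι, ∑ z ∈ P ×ˢ Pᶜ, if z.1 ∈ B i ∧ z.2 ∈ B i then 1 else 0 := by
        refine Finset.sum_congr rfl fun i _ => ?_
        rw [← Finset.card_filter, Finset.filter_product, Finset.card_product,
          Finset.filter_mem_eq_inter, Finset.filter_mem_eq_inter,
          Finset.inter_comm P, Finset.inter_comm Pᶜ]
    _ = ∑ z ∈ P ×ˢ Pᶜ, ∑ i : ι, if z.1 ∈ B i ∧ z.2 ∈ B i then 1 else 0 :=
        Finset.sum_comm
    _ = ∑ z ∈ P ×ˢ Pᶜ, 1 := by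
        refine Finset.sum_congr rfl fun z hz => ?_
        rw [← Finset.card_filter]
        obtain ⟨h1, h2⟩ := Finset.mem_product.mp hz
        exact hpair z.1 z.2 (fun h => (Finset.mem_compl.mp h2) (h ▸ h1))
    _ = P.card * Pᶜ.card := by rw [Finset.sum_const, smul_eq_mul, mul_one,
        Finset.card_product]

lemma sts_pointwise (a c : ℕ) (h : a + c = 3) :
    c * c - c ≤ (if a = 0 then 6 else 0) + a * c := by
  have ha : a ≤ 3 := by omega
  have hc : c ≤ 3 := by omega
  interval_cases a <;> interval_cases c <;> first | omega | norm_num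

lemma sts_arith (p q b v : ℕ) (hpq : p + q = v) (hv : 4 ≤ v) (hI : q ≤ 3 * b)
    (hII : q * q - q ≤ 6 * b + p * q) : 2 * v ≤ 3 * (p + b) + 3 := by
  have hII' : q * q ≤ 6 * b + p * q + q := Nat.sub_le_iff_le_add.mp hII
  by_cases h1 : v ≤ 2 * p + 3
  · omega
  · have hq4 : p + 4 ≤ q := by omega
    have hm : q * (p + 4) ≤ q * q := Nat.mul_le_mul_left q hq4
    have h3q : 3 * q ≤ 6 * b := by nlinarith
    by_cases h3 : v ≤ 3 * p + 6
    · omega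
    · -- 3p + 7 ≤ v
      have h7 : 3 * p + 7 ≤ v := by omega
      have key : (q : ℤ) * q ≤ 6 * b + p * q + q := by exact_mod_cast hII'
      have hpq' : (p : ℤ) + q = v := by exact_mod_cast hpq
      have h7' : 3 * (p : ℤ) + 7 ≤ v := by exact_mod_cast h7
      have hv' : (4 : ℤ) ≤ v := by exact_mod_cast hv
      have e1 : 2 * (v : ℤ) + 7 ≤ 3 * q := by linarith
      have e2 : (v : ℤ) + 11 ≤ 3 * (q - p - 1) := by linarith
      have e0 : (0 : ℤ) ≤ 2 * v + 7 := by linarith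
      have e0' : (0 : ℤ) ≤ v + 11 := by linarith
      have prod : (2 * (v : ℤ) + 7) * (v + 11) ≤ (3 * q) * (3 * (q - p - 1)) :=
        mul_le_mul e1 e2 e0' (by linarith)
      have hb : (0 : ℤ) ≤ p := by positivity
      suffices h : 2 * (v : ℤ) ≤ 3 * (p + b) + 3 by exact_mod_cast h
      nlinarith [prod, key, hb, hv']

/-- For a Steiner triple system on `v` points (a `(v,3,1)`-design),
`γ(D) ≥ ⌈2v/3⌉ - 1`. -/
theorem stmt13 [Fintype α] [Fintype ι] [DecidableEq α]
    (B : ι → Finset α) (v : ℕ)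
    (hv : Fintype.card α = v) (hkv : 3 < v)
    (hblock : ∀ i, (B i).card = 3)
    (hpair : ∀ x y : α, x ≠ y →
      (Finset.univ.filter fun i => x ∈ B i ∧ y ∈ B i).card = 1) :
    (2 * v) ⌈/⌉ 3 - 1 ≤ domNum (incGraph B) := by
  classical
  refine le_csInf ⟨Fintype.card (α ⊕ ι), Finset.univ,
    fun x hx => absurd (Finset.mem_univ x) hx, Finset.card_univ⟩ ?_
  rintro n ⟨S, hS, rfl⟩
  set P : Finset α := S.toLeft with hP
  set Bs : Finset ι := S.toRight with hBs
  have hcard : P.card + Bs.card = S.card := Finset.card_toLeft_add_card_toRight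
  set p := P.card with hp
  set b := Bs.card with hb
  set q := Pᶜ.card with hq
  have hpq : p + q = v := by rw [hp, hq, Finset.card_add_card_compl, hv]
  -- every block avoiding P is in Bs
  have hblk : (Finset.univ.filter fun i => (B i ∩ P).card = 0) ⊆ Bs := by
    intro i hi
    rw [Finset.mem_filter, Finset.card_eq_zero] at hi
    by_contra hiBs
    have hiS : Sum.inr i ∉ S := fun h => hiBs (Finset.mem_toRight.mpr h)
    obtain ⟨s, hsS, hadj⟩ := hS _ hiS
    rcases hadj with ⟨x, j, h1, _, _⟩ | ⟨x, j, h1, h2, hmem⟩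
    · exact nomatch h1
    · obtain rfl : i = j := Sum.inr.inj h1
      have hxP : x ∈ P := Finset.mem_toLeft.mpr (h2 ▸ hsS)
      have : x ∈ B i ∩ P := Finset.mem_inter.mpr ⟨hmem, hxP⟩
      rw [hi.2] at this
      exact absurd this (Finset.notMem_empty x)
  -- every point outside P is covered by a block in Bs
  have hQcov : Pᶜ ⊆ Bs.biUnion B := by
    intro x hx
    have hxS : Sum.inl x ∉ S := fun h =>
      (Finset.mem_compl.mp hx) (Finset.mem_toLeft.mpr h)
    obtain ⟨s, hsS, hadj⟩ := hS _ hxS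
    rcases hadj with ⟨y, j, h1, h2, hmem⟩ | ⟨y, j, h1, _, _⟩
    · obtain rfl : x = y := Sum.inl.inj h1
      exact Finset.mem_biUnion.mpr ⟨j, Finset.mem_toRight.mpr (h2 ▸ hsS), hmem⟩
    · exact nomatch h1
  -- inequality (I) : q ≤ 3 b
  have hI : q ≤ 3 * b := by
    calc q ≤ (Bs.biUnion B).card := Finset.card_le_card hQcov
      _ ≤ ∑ i ∈ Bs, (B i).card := Finset.card_biUnion_le
      _ = 3 * b := by simp [hblock, mul_comm, hb]
  -- per-block decomposition
  have habc : ∀ i, (B i ∩ P).card + (B i ∩ Pᶜ).card = 3 := by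
    intro i
    have h := Finset.card_inter_add_card_sdiff (B i) P
    rw [sdiff_eq, hblock i] at h
    exact h
  -- inequality (II) : q² − q ≤ 6 b + p q
  have hII : q * q - q ≤ 6 * b + p * q := by
    rw [hq, ← sts_count_pairs B hpair Pᶜ, ← sts_count_cross B hpair P]
    calc ∑ i : ι, ((B i ∩ Pᶜ).offDiag).card
        ≤ ∑ i : ι, ((if (B i ∩ P).card = 0 then 6 else 0)
            + (B i ∩ P).card * (B i ∩ Pᶜ).card) := by
          refine Finset.sum_le_sum fun i _ => ?_
          rw [Finset.offDiag_card]
          exact sts_pointwise _ _ (habc i)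
      _ = (∑ i : ι, if (B i ∩ P).card = 0 then 6 else 0)
            + ∑ i : ι, (B i ∩ P).card * (B i ∩ Pᶜ).card := Finset.sum_add_distrib
      _ ≤ 6 * b + ∑ i : ι, (B i ∩ P).card * (B i ∩ Pᶜ).card := by
          gcongr
          rw [← Finset.sum_filter, Finset.sum_const, smul_eq_mul, mul_comm]
          exact Nat.mul_le_mul_left 6 (Finset.card_le_card hblk)
  have harith := sts_arith p q b v hpq (by omega) hI hII
  rw [← hcard, Nat.ceilDiv_eq_add_pred_div]
  omega
end

section
/- Let D be a Steiner triple system on 19 points (a (19,3,1)-design). Then 12 ≤ γ(D) ≤ 15. -/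
open Finset

variable {α ι : Type*}

/-! ### Auxiliary counting lemmas -/

lemma STS14.swap_count {β γ : Type*} (s : Finset β) (t : Finset γ) (p : β → γ → Prop)
    [∀ b c, Decidable (p b c)] :
    ∑ b ∈ s, (t.filter (fun c => p b c)).card = ∑ c ∈ t, (s.filter (fun b => p b c)).card := by
  simp only [Finset.card_filter]
  rw [Finset.sum_comm]

/-- Each point lies on exactly 9 blocks. -/
lemma STS14.r9 [Fintype α] [Fintype ι] [DecidableEq α] (B : ι → Finset α)
    (hv : Fintype.card α = 19) (hblock : ∀ i, (B i).card = 3)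
    (hpair : ∀ x y : α, x ≠ y →
      (Finset.univ.filter fun i => x ∈ B i ∧ y ∈ B i).card = 1)
    (x : α) : (univ.filter fun i => x ∈ B i).card = 9 := by
  classical
  have h1 : ∑ y ∈ univ.erase x, (univ.filter fun i => x ∈ B i ∧ y ∈ B i).card = 18 := by
    rw [Finset.sum_congr rfl (fun y hy => hpair x y (Ne.symm (Finset.ne_of_mem_erase hy)))]
    simp [Finset.card_erase_of_mem, hv]
  rw [STS14.swap_count] at h1
  have h2 : ∀ i : ι, ((univ.erase x).filter fun y => x ∈ B i ∧ y ∈ B i).card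
      = if x ∈ B i then 2 else 0 := by
    intro i
    split_ifs with hx
    · have : ((univ.erase x).filter fun y => x ∈ B i ∧ y ∈ B i) = (B i).erase x := by
        ext y
        simp only [Finset.mem_filter, Finset.mem_erase, Finset.mem_univ, true_and, and_true]
        tauto
      rw [this, Finset.card_erase_of_mem hx, hblock]
    · have : ((univ.erase x).filter fun y => x ∈ B i ∧ y ∈ B i) = ∅ := by
        ext y; simp only [Finset.mem_filter, Finset.notMem_empty, iff_false]
        tauto
      simp [this]
  rw [Finset.sum_congr rfl (fun i _ => h2 i), Finset.sum_ite, Finset.sum_const_zero,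
    Finset.sum_const, add_zero, smul_eq_mul] at h1
  omega

/-- There are exactly 57 blocks. -/
lemma STS14.card57 [Fintype α] [Fintype ι] [DecidableEq α] (B : ι → Finset α)
    (hv : Fintype.card α = 19) (hblock : ∀ i, (B i).card = 3)
    (hpair : ∀ x y : α, x ≠ y →
      (Finset.univ.filter fun i => x ∈ B i ∧ y ∈ B i).card = 1) :
    Fintype.card ι = 57 := by
  classical
  have h1 : ∑ x : α, (univ.filter fun i => x ∈ B i).card = 171 := by
    rw [Finset.sum_congr rfl (fun x _ => STS14.r9 B hv hblock hpair x)]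
    simp [hv]
  rw [STS14.swap_count] at h1
  have h2 : ∀ i : ι, (univ.filter fun x => x ∈ B i).card = 3 := by
    intro i; rw [Finset.filter_mem_eq_inter, Finset.univ_inter, hblock]
  rw [Finset.sum_congr rfl (fun i _ => h2 i)] at h1
  simp only [Finset.sum_const, smul_eq_mul, Finset.card_univ] at h1
  omega

lemma STS14.sum_inter [Fintype α] [Fintype ι] [DecidableEq α] (B : ι → Finset α)
    (hv : Fintype.card α = 19) (hblock : ∀ i, (B i).card = 3)
    (hpair : ∀ x y : α, x ≠ y →
      (Finset.univ.filter fun i => x ∈ B i ∧ y ∈ B i).card = 1)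
    (P : Finset α) : ∑ i : ι, (B i ∩ P).card = 9 * P.card := by
  classical
  have h1 : ∀ i : ι, (B i ∩ P).card = (P.filter fun x => x ∈ B i).card := by
    intro i; rw [Finset.filter_mem_eq_inter, Finset.inter_comm]
  rw [Finset.sum_congr rfl (fun i _ => h1 i), ← STS14.swap_count]
  rw [Finset.sum_congr rfl (fun x _ => STS14.r9 B hv hblock hpair x)]
  simp [mul_comm]

lemma STS14.sum_pairs [Fintype α] [Fintype ι] [DecidableEq α] (B : ι → Finset α)
    (hpair : ∀ x y : α, x ≠ y →
      (Finset.univ.filter fun i => x ∈ B i ∧ y ∈ B i).card = 1)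
    (P : Finset α) :
    ∑ i : ι, (B i ∩ P).card * ((B i ∩ P).card - 1) = P.card * (P.card - 1) := by
  classical
  have h1 : ∑ q ∈ P.offDiag, (univ.filter fun i => q.1 ∈ B i ∧ q.2 ∈ B i).card
      = P.card * (P.card - 1) := by
    rw [Finset.sum_congr rfl (fun q hq => hpair q.1 q.2 (Finset.mem_offDiag.mp hq).2.2)]
    simp only [Finset.sum_const, smul_eq_mul, mul_one]
    rw [Finset.offDiag_card]
    exact (Nat.mul_pred ..).symm
  rw [STS14.swap_count] at h1
  rw [← h1]
  refine Finset.sum_congr rfl (fun i _ => ?_)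
  have h2 : (P.offDiag.filter fun q => q.1 ∈ B i ∧ q.2 ∈ B i) = (B i ∩ P).offDiag := by
    ext q
    simp only [Finset.mem_filter, Finset.mem_offDiag, Finset.mem_inter]
    tauto
  rw [h2, Finset.offDiag_card]; exact Nat.mul_pred ..

/-! ### The lower bound -/

lemma STS14.lower_bound [Fintype α] [Fintype ι] [DecidableEq α] (B : ι → Finset α)
    (hv : Fintype.card α = 19) (hblock : ∀ i, (B i).card = 3)
    (hpair : ∀ x y : α, x ≠ y →
      (Finset.univ.filter fun i => x ∈ B i ∧ y ∈ B i).card = 1)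
    (S : Finset (α ⊕ ι)) (hS : IsDomSet (incGraph B) S) :
    12 ≤ S.card := by
  classical
  set P : Finset α := univ.filter (fun p => Sum.inl p ∈ S) with hP
  set L : Finset ι := univ.filter (fun i => Sum.inr i ∈ S) with hL
  have hcard : P.card + L.card ≤ S.card := by
    have hsub : P.image Sum.inl ∪ L.image Sum.inr ⊆ S := by
      intro v hv'
      rcases Finset.mem_union.mp hv' with h | h
      · obtain ⟨p, hp, rfl⟩ := Finset.mem_image.mp h
        exact (Finset.mem_filter.mp hp).2
      · obtain ⟨i, hi, rfl⟩ := Finset.mem_image.mp h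
        exact (Finset.mem_filter.mp hi).2
    calc P.card + L.card
        = (P.image (Sum.inl : α → α ⊕ ι)).card + (L.image (Sum.inr : ι → α ⊕ ι)).card := by
          rw [Finset.card_image_of_injective _ Sum.inl_injective,
            Finset.card_image_of_injective _ Sum.inr_injective]
      _ = (P.image Sum.inl ∪ L.image Sum.inr).card := by
          rw [Finset.card_union_of_disjoint (by simp [Finset.disjoint_left])]
      _ ≤ S.card := Finset.card_le_card hsub
  have hcover : univ \ P ⊆ L.biUnion B := by
    intro p hp
    have hp' : Sum.inl p ∉ S := by
      simpa [hP] using hp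
    obtain ⟨s, hsS, hadj⟩ := hS _ hp'
    rcases hadj with ⟨q, i, hq, rfl, hmem⟩ | ⟨q, i, h, -, -⟩
    · obtain rfl : p = q := by injection hq
      exact Finset.mem_biUnion.mpr ⟨i, Finset.mem_filter.mpr ⟨Finset.mem_univ _, hsS⟩, hmem⟩
    · exact absurd h (by simp)
  have h5 : P.card ≤ 19 := by
    have := Finset.card_le_card (Finset.subset_univ P)
    rwa [Finset.card_univ, hv] at this
  have h1 : 19 ≤ P.card + 3 * L.card := by
    have hc := Finset.card_le_card hcover
    have h2 := Finset.card_biUnion_le (s := L) (t := B)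
    have h3 : ∑ i ∈ L, (B i).card = 3 * L.card := by
      rw [Finset.sum_congr rfl (fun i _ => hblock i)]; simp [mul_comm]
    have h4 : (univ \ P).card = 19 - P.card := by
      rw [Finset.card_sdiff_of_subset (Finset.subset_univ _), Finset.card_univ, hv]
    omega
  have hmeet : ∀ i, i ∉ L → (B i ∩ P).Nonempty := by
    intro i hi
    have hi' : Sum.inr i ∉ S := by simpa [hL] using hi
    obtain ⟨s, hsS, hadj⟩ := hS _ hi'
    rcases hadj with ⟨q, j, h, -, -⟩ | ⟨q, j, hj, rfl, hmem⟩
    · exact absurd h (by simp)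
    · obtain rfl : i = j := by injection hj
      exact ⟨q, Finset.mem_inter.mpr ⟨hmem, Finset.mem_filter.mpr ⟨Finset.mem_univ _, hsS⟩⟩⟩
  set M : ℕ := (univ.filter fun i => (B i ∩ P).Nonempty).card with hM
  have h6 : 57 ≤ M + L.card := by
    have hsub : univ.filter (fun i => ¬ (B i ∩ P).Nonempty) ⊆ L := by
      intro i hi
      by_contra hiL
      exact (Finset.mem_filter.mp hi).2 (hmeet i hiL)
    have hle := Finset.card_le_card hsub
    have hsplit := Finset.card_filter_add_card_filter_not
      (s := (univ : Finset ι)) (p := fun i => (B i ∩ P).Nonempty)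
    rw [Finset.card_univ, STS14.card57 B hv hblock hpair] at hsplit
    omega
  have h7 : 3 * M + P.card * (P.card - 1) ≤ 27 * P.card := by
    have hpt : ∀ i ∈ (univ : Finset ι), (3 * if (B i ∩ P).Nonempty then 1 else 0)
        + (B i ∩ P).card * ((B i ∩ P).card - 1) ≤ 3 * (B i ∩ P).card := by
      intro i _
      have ht : (B i ∩ P).card ≤ 3 := by
        have := Finset.card_le_card (Finset.inter_subset_left (s₁ := B i) (s₂ := P))
        rw [hblock] at this; exact this
      split_ifs with h
      · have h1 : 1 ≤ (B i ∩ P).card := Finset.card_pos.mpr h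
        set t := (B i ∩ P).card
        interval_cases t <;> omega
      · have h0 : (B i ∩ P).card = 0 := by
          simp [Finset.card_eq_zero, Finset.not_nonempty_iff_eq_empty.mp h]
        simp [h0]
    have hsum := Finset.sum_le_sum hpt
    rw [Finset.sum_add_distrib, ← Finset.mul_sum, ← Finset.mul_sum,
      STS14.sum_pairs B hpair, STS14.sum_inter B hv hblock hpair] at hsum
    have hind : ∑ i : ι, (if (B i ∩ P).Nonempty then 1 else 0) = M := by
      rw [Finset.sum_ite, Finset.sum_const_zero, add_zero, Finset.sum_const, smul_eq_mul, mul_one]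
    rw [hind] at hsum
    omega
  have key : 12 ≤ P.card + L.card := by
    set a := P.card with ha
    set b := L.card with hb
    clear_value a b
    interval_cases a <;> omega
  omega

/-! ### Tools for the upper bound -/

lemma STS14.block_unique [Fintype ι] [DecidableEq α] (B : ι → Finset α)
    (hpair : ∀ x y : α, x ≠ y →
      (Finset.univ.filter fun i => x ∈ B i ∧ y ∈ B i).card = 1)
    {x y : α} {i j : ι} (hxy : x ≠ y)
    (hxi : x ∈ B i) (hyi : y ∈ B i) (hxj : x ∈ B j) (hyj : y ∈ B j) : i = j := by
  classical
  obtain ⟨k, hk⟩ := Finset.card_eq_one.mp (hpair x y hxy)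
  have h1 : i ∈ ({k} : Finset ι) := hk ▸ (Finset.mem_filter.mpr ⟨Finset.mem_univ _, hxi, hyi⟩)
  have h2 : j ∈ ({k} : Finset ι) := hk ▸ (Finset.mem_filter.mpr ⟨Finset.mem_univ _, hxj, hyj⟩)
  rw [Finset.mem_singleton.mp h1, Finset.mem_singleton.mp h2]

lemma STS14.block_inter [DecidableEq α] (B : ι → Finset α) (hblock : ∀ i, (B i).card = 3)
    {I : Finset α} (hind : ∀ i, ¬ B i ⊆ I) {p : α} (hp : p ∉ I)
    {i : ι} (hi : B i ⊆ insert p I) :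
    p ∈ B i ∧ (B i ∩ I).card = 2 := by
  classical
  have hpB : p ∈ B i := by
    by_contra hpB
    refine hind i (fun q hq => ?_)
    rcases Finset.mem_insert.mp (hi hq) with rfl | h
    · exact absurd hq hpB
    · exact h
  refine ⟨hpB, ?_⟩
  have heq : B i ∩ I = (B i).erase p := by
    ext q
    simp only [Finset.mem_inter, Finset.mem_erase]
    constructor
    · rintro ⟨hq, hqI⟩
      exact ⟨fun h => hp (h ▸ hqI), hq⟩
    · rintro ⟨hqp, hq⟩
      refine ⟨hq, ?_⟩
      rcases Finset.mem_insert.mp (hi hq) with rfl | h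
      · exact absurd rfl hqp
      · exact h
  rw [heq, Finset.card_erase_of_mem hpB, hblock]

/-- Any finite set of points can be covered by at most `⌈|Q|/2⌉` blocks. -/
lemma STS14.cover_lemma [Fintype α] [Fintype ι] [DecidableEq α] (B : ι → Finset α)
    (hv : Fintype.card α = 19)
    (hpair : ∀ x y : α, x ≠ y →
      (Finset.univ.filter fun i => x ∈ B i ∧ y ∈ B i).card = 1) :
    ∀ n (Q : Finset α), Q.card ≤ n →
      ∃ L : Finset ι, 2 * L.card ≤ Q.card + 1 ∧ ∀ p ∈ Q, ∃ i ∈ L, p ∈ B i := by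
  classical
  intro n
  induction n with
  | zero =>
    intro Q hQ
    refine ⟨∅, by simp, fun p hp => absurd hp ?_⟩
    simp [Finset.card_eq_zero.mp (Nat.le_zero.mp hQ)]
  | succ n ih =>
    intro Q hQ
    rcases Q.eq_empty_or_nonempty with rfl | ⟨x, hx⟩
    · exact ⟨∅, by simp, fun p hp => absurd hp (by simp)⟩
    by_cases hy : ∃ y ∈ Q, y ≠ x
    · obtain ⟨y, hyQ, hyx⟩ := hy
      have h1 : 0 < (univ.filter fun i => x ∈ B i ∧ y ∈ B i).card := by
        rw [hpair x y (Ne.symm hyx)]; norm_num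
      obtain ⟨i, hi⟩ := Finset.card_pos.mp h1
      obtain ⟨-, hxi, hyi⟩ := Finset.mem_filter.mp hi
      have h2 : 2 ≤ (Q ∩ B i).card := by
        have : ({x, y} : Finset α) ⊆ Q ∩ B i := by
          intro z hz
          rcases Finset.mem_insert.mp hz with rfl | hz
          · exact Finset.mem_inter.mpr ⟨hx, hxi⟩
          · rw [Finset.mem_singleton.mp hz]
            exact Finset.mem_inter.mpr ⟨hyQ, hyi⟩
        calc 2 = ({x, y} : Finset α).card := by
              rw [Finset.card_insert_of_notMem (by simp [hyx.symm]), Finset.card_singleton]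
          _ ≤ _ := Finset.card_le_card this
      have h3 : (Q ∩ B i).card + (Q \ B i).card = Q.card :=
        Finset.card_inter_add_card_sdiff Q (B i)
      obtain ⟨L', hL'card, hL'cov⟩ := ih (Q \ B i) (by omega)
      refine ⟨insert i L', ?_, ?_⟩
      · have := Finset.card_insert_le i L'
        omega
      · intro p hp
        by_cases hpB : p ∈ B i
        · exact ⟨i, Finset.mem_insert_self _ _, hpB⟩
        · obtain ⟨j, hj, hpj⟩ := hL'cov p (Finset.mem_sdiff.mpr ⟨hp, hpB⟩)
          exact ⟨j, Finset.mem_insert_of_mem hj, hpj⟩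
    · push_neg at hy
      have hnt : Nontrivial α := by
        apply Fintype.one_lt_card_iff_nontrivial.mp
        omega
      obtain ⟨y, hyx⟩ := exists_ne x
      have h1 : 0 < (univ.filter fun i => x ∈ B i ∧ y ∈ B i).card := by
        rw [hpair x y (Ne.symm hyx)]; norm_num
      obtain ⟨i, hi⟩ := Finset.card_pos.mp h1
      obtain ⟨-, hxi, -⟩ := Finset.mem_filter.mp hi
      refine ⟨{i}, ?_, fun p hp => ⟨i, Finset.mem_singleton_self i, ?_⟩⟩
      · have : 1 ≤ Q.card := Finset.card_pos.mpr ⟨x, hx⟩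
        simp only [Finset.card_singleton]; omega
      · rw [hy p hp]; exact hxi

/-- Greedy construction of an independent set of size 6. -/
lemma STS14.indep6 [Fintype α] [Fintype ι] [DecidableEq α] (B : ι → Finset α)
    (hv : Fintype.card α = 19)
    (hblock : ∀ i, (B i).card = 3)
    (hpair : ∀ x y : α, x ≠ y →
      (Finset.univ.filter fun i => x ∈ B i ∧ y ∈ B i).card = 1) :
    ∃ I : Finset α, I.card = 6 ∧ ∀ i, ¬ B i ⊆ I := by
  classical
  suffices h : ∀ k, k ≤ 6 → ∃ I : Finset α, I.card = k ∧ ∀ i, ¬ B i ⊆ I from h 6 le_rfl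
  intro k
  induction k with
  | zero =>
    intro _
    refine ⟨∅, Finset.card_empty, fun i hi => ?_⟩
    have := Finset.card_le_card hi
    rw [hblock] at this; simp at this
  | succ k ih =>
    intro hk
    obtain ⟨I, hIcard, hind⟩ := ih (by omega)
    set F : Finset α := I ∪ univ.filter (fun p => ∃ i, B i ⊆ insert p I) with hF
    have hbadcard : (univ.filter (fun p => ∃ i, B i ⊆ insert p I)).card ≤ Nat.choose k 2 := by
      have hmap : ∀ p ∈ univ.filter (fun p => ∃ i, B i ⊆ insert p I),
          (if h : ∃ i, B i ⊆ insert p I then B h.choose ∩ I else ∅) ∈ I.powersetCard 2 := by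
        intro p hp
        obtain ⟨-, hex⟩ := Finset.mem_filter.mp hp
        rw [dif_pos hex]
        have hpI : p ∉ I := fun hpI => hind hex.choose
          (hex.choose_spec.trans (Finset.insert_subset hpI Finset.Subset.rfl))
        obtain ⟨-, hcard2⟩ := STS14.block_inter B hblock hind hpI hex.choose_spec
        exact Finset.mem_powersetCard.mpr ⟨Finset.inter_subset_right, hcard2⟩
      have hinj : ∀ p ∈ univ.filter (fun p => ∃ i, B i ⊆ insert p I),
          ∀ q ∈ univ.filter (fun p => ∃ i, B i ⊆ insert p I),
          (if h : ∃ i, B i ⊆ insert p I then B h.choose ∩ I else ∅)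
            = (if h : ∃ i, B i ⊆ insert q I then B h.choose ∩ I else ∅) → p = q := by
        intro p hp q hq heq
        obtain ⟨-, hexp⟩ := Finset.mem_filter.mp hp
        obtain ⟨-, hexq⟩ := Finset.mem_filter.mp hq
        rw [dif_pos hexp, dif_pos hexq] at heq
        by_contra hpq
        have hpI : p ∉ I := fun hpI => hind hexp.choose
          (hexp.choose_spec.trans (Finset.insert_subset hpI Finset.Subset.rfl))
        have hqI : q ∉ I := fun hqI => hind hexq.choose
          (hexq.choose_spec.trans (Finset.insert_subset hqI Finset.Subset.rfl))
        obtain ⟨hpB, hcard2p⟩ := STS14.block_inter B hblock hind hpI hexp.choose_spec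
        obtain ⟨hqB, hcard2q⟩ := STS14.block_inter B hblock hind hqI hexq.choose_spec
        obtain ⟨x, y, hxy, hDxy⟩ := Finset.card_eq_two.mp hcard2p
        have hxp : x ∈ B hexp.choose ∩ I := hDxy ▸ Finset.mem_insert_self x {y}
        have hyp : y ∈ B hexp.choose ∩ I := hDxy ▸ (by simp)
        have hxq : x ∈ B hexq.choose ∩ I := heq ▸ hxp
        have hyq : y ∈ B hexq.choose ∩ I := heq ▸ hyp
        have hij : hexp.choose = hexq.choose :=
          STS14.block_unique B hpair hxy (Finset.mem_inter.mp hxp).1 (Finset.mem_inter.mp hyp).1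
            (Finset.mem_inter.mp hxq).1 (Finset.mem_inter.mp hyq).1
        have := hexq.choose_spec (hij ▸ hpB)
        rcases Finset.mem_insert.mp this with h | h
        · exact hpq h
        · exact hpI h
      calc (univ.filter (fun p => ∃ i, B i ⊆ insert p I)).card
          ≤ (I.powersetCard 2).card := Finset.card_le_card_of_injOn _ hmap hinj
        _ = Nat.choose k 2 := by rw [Finset.card_powersetCard, hIcard]
    have hFcard : F.card ≤ 15 := by
      have h1 : F.card ≤ I.card + (univ.filter (fun p => ∃ i, B i ⊆ insert p I)).card := by
        rw [hF]; exact Finset.card_union_le _ _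
      have h2 : Nat.choose k 2 ≤ 10 := by
        calc Nat.choose k 2 ≤ Nat.choose 5 2 := Nat.choose_le_choose 2 (by omega)
          _ = 10 := by decide
      omega
    have hFne : F ≠ univ := by
      intro h
      have := congrArg Finset.card h
      rw [Finset.card_univ, hv] at this
      omega
    obtain ⟨p, -, hpF⟩ := Finset.exists_of_ssubset (Finset.ssubset_univ_iff.mpr hFne)
    have hpI : p ∉ I := fun h => hpF (Finset.mem_union_left _ h)
    refine ⟨insert p I, by rw [Finset.card_insert_of_notMem hpI, hIcard], fun i hi => ?_⟩
    exact hpF (Finset.mem_union_right _ (Finset.mem_filter.mpr ⟨Finset.mem_univ _, ⟨i, hi⟩⟩))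

/-- Averaging: an independent set of size 6 or 7 can be extended by a point creating
at most one block. -/
lemma STS14.averaging [Fintype α] [Fintype ι] [DecidableEq α] (B : ι → Finset α)
    (hv : Fintype.card α = 19)
    (hblock : ∀ i, (B i).card = 3)
    (hpair : ∀ x y : α, x ≠ y →
      (Finset.univ.filter fun i => x ∈ B i ∧ y ∈ B i).card = 1)
    (I : Finset α) (hind : ∀ i, ¬ B i ⊆ I) (h6 : 6 ≤ I.card) (h7 : I.card ≤ 7) :
    ∃ z, z ∉ I ∧ (univ.filter fun i => B i ⊆ insert z I).card ≤ 1 := by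
  classical
  by_contra hcon
  push_neg at hcon
  have hall : ∀ z ∈ univ \ I, 2 ≤ (univ.filter fun i => B i ⊆ insert z I).card := by
    intro z hz
    exact hcon z (Finset.mem_sdiff.mp hz).2
  have hdisj : ∀ z ∈ (univ \ I : Finset α), ∀ z' ∈ (univ \ I : Finset α), z ≠ z' →
      Disjoint (univ.filter fun i => B i ⊆ insert z I)
        (univ.filter fun i => B i ⊆ insert z' I) := by
    intro z hz z' hz' hne
    rw [Finset.disjoint_left]
    intro i hi hi'
    have h1 := (Finset.mem_filter.mp hi).2
    have h2 := (Finset.mem_filter.mp hi').2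
    refine hind i (fun q hq => ?_)
    rcases Finset.mem_insert.mp (h1 hq) with rfl | h
    · rcases Finset.mem_insert.mp (h2 hq) with h' | h'
      · exact absurd h' hne
      · exact h'
    · exact h
  have hsum : ∑ z ∈ univ \ I, (univ.filter fun i => B i ⊆ insert z I).card
      = ((univ \ I).biUnion (fun z => univ.filter fun i => B i ⊆ insert z I)).card :=
    (Finset.card_biUnion hdisj).symm
  have hbound : ((univ \ I).biUnion (fun z => univ.filter fun i => B i ⊆ insert z I)).card
      ≤ Nat.choose I.card 2 := by
    have hmap : ∀ i ∈ (univ \ I).biUnion (fun z => univ.filter fun i => B i ⊆ insert z I),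
        B i ∩ I ∈ I.powersetCard 2 := by
      intro i hi
      obtain ⟨z, hz, hif⟩ := Finset.mem_biUnion.mp hi
      have hzI : z ∉ I := (Finset.mem_sdiff.mp hz).2
      obtain ⟨-, hc2⟩ := STS14.block_inter B hblock hind hzI (Finset.mem_filter.mp hif).2
      exact Finset.mem_powersetCard.mpr ⟨Finset.inter_subset_right, hc2⟩
    have hinj : ∀ i ∈ (univ \ I).biUnion (fun z => univ.filter fun i => B i ⊆ insert z I),
        ∀ j ∈ (univ \ I).biUnion (fun z => univ.filter fun i => B i ⊆ insert z I),
        B i ∩ I = B j ∩ I → i = j := by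
      intro i hi j hj heq
      have h2 : (B i ∩ I).card = 2 := (Finset.mem_powersetCard.mp (hmap i hi)).2
      obtain ⟨x, y, hxy, hD⟩ := Finset.card_eq_two.mp h2
      have hx : x ∈ B i ∩ I := hD ▸ Finset.mem_insert_self x {y}
      have hy : y ∈ B i ∩ I := hD ▸ (by simp)
      have hx' : x ∈ B j ∩ I := heq ▸ hx
      have hy' : y ∈ B j ∩ I := heq ▸ hy
      exact STS14.block_unique B hpair hxy (Finset.mem_inter.mp hx).1 (Finset.mem_inter.mp hy).1
        (Finset.mem_inter.mp hx').1 (Finset.mem_inter.mp hy').1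
    calc ((univ \ I).biUnion (fun z => univ.filter fun i => B i ⊆ insert z I)).card
        ≤ (I.powersetCard 2).card := Finset.card_le_card_of_injOn _ hmap hinj
      _ = Nat.choose I.card 2 := by rw [Finset.card_powersetCard]
  have hchoose : Nat.choose I.card 2 ≤ 21 := by
    calc Nat.choose I.card 2 ≤ Nat.choose 7 2 := Nat.choose_le_choose 2 h7
      _ = 21 := by decide
  have hlow : 2 * (univ \ I).card
      ≤ ∑ z ∈ univ \ I, (univ.filter fun i => B i ⊆ insert z I).card := by
    calc 2 * (univ \ I).card = ∑ _z ∈ univ \ I, 2 := by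
          rw [Finset.sum_const, smul_eq_mul, mul_comm]
      _ ≤ _ := Finset.sum_le_sum hall
  have hcardsd : (univ \ I).card = 19 - I.card := by
    rw [Finset.card_sdiff_of_subset (Finset.subset_univ _), Finset.card_univ, hv]
  omega

/-- Assembling a dominating set from a point set and covering blocks. -/
lemma STS14.assemble [Fintype α] [Fintype ι] [DecidableEq α] [DecidableEq ι]
    (B : ι → Finset α)
    (hv : Fintype.card α = 19)
    (J : Finset α) (L0 C : Finset ι)
    (hins : ∀ i, B i ⊆ J → i ∈ L0)
    (hcov : ∀ p ∈ J, ∃ i ∈ L0 ∪ C, p ∈ B i) :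
    ∃ S : Finset (α ⊕ ι), IsDomSet (incGraph B) S ∧
      S.card ≤ (19 - J.card) + (L0.card + C.card) := by
  classical
  refine ⟨((univ \ J).image Sum.inl) ∪ ((L0 ∪ C).image Sum.inr), ?_, ?_⟩
  · intro v hv'
    match v with
    | Sum.inl p =>
      have hpJ : p ∈ J := by
        by_contra hpJ
        exact hv' (Finset.mem_union_left _ (Finset.mem_image.mpr
          ⟨p, Finset.mem_sdiff.mpr ⟨Finset.mem_univ _, hpJ⟩, rfl⟩))
      obtain ⟨i, hiL, hpB⟩ := hcov p hpJ
      exact ⟨Sum.inr i, Finset.mem_union_right _ (Finset.mem_image.mpr ⟨i, hiL, rfl⟩),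
        Or.inl ⟨p, i, rfl, rfl, hpB⟩⟩
    | Sum.inr i =>
      have hiL : i ∉ L0 := by
        intro h
        exact hv' (Finset.mem_union_right _ (Finset.mem_image.mpr
          ⟨i, Finset.mem_union_left _ h, rfl⟩))
      have hni : ¬ B i ⊆ J := fun h => hiL (hins i h)
      obtain ⟨q, hqB, hqJ⟩ := Finset.not_subset.mp hni
      exact ⟨Sum.inl q, Finset.mem_union_left _ (Finset.mem_image.mpr
        ⟨q, Finset.mem_sdiff.mpr ⟨Finset.mem_univ _, hqJ⟩, rfl⟩),
        Or.inr ⟨q, i, rfl, rfl, hqB⟩⟩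
  · calc (((univ \ J).image Sum.inl) ∪ ((L0 ∪ C).image Sum.inr)).card
        ≤ ((univ \ J).image (Sum.inl : α → α ⊕ ι)).card
          + ((L0 ∪ C).image (Sum.inr : ι → α ⊕ ι)).card := Finset.card_union_le _ _
      _ ≤ (univ \ J).card + (L0 ∪ C).card := by
          gcongr <;> exact Finset.card_image_le
      _ ≤ (19 - J.card) + (L0.card + C.card) := by
          have h1 : (univ \ J).card = 19 - J.card := by
            rw [Finset.card_sdiff_of_subset (Finset.subset_univ _), Finset.card_univ, hv]
          have h2 := Finset.card_union_le L0 C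
          omega

/-- The upper bound: a dominating set of size at most 15 exists. -/
lemma STS14.upper_ex [Fintype α] [Fintype ι] [DecidableEq α] (B : ι → Finset α)
    (hv : Fintype.card α = 19)
    (hblock : ∀ i, (B i).card = 3)
    (hpair : ∀ x y : α, x ≠ y →
      (Finset.univ.filter fun i => x ∈ B i ∧ y ∈ B i).card = 1) :
    ∃ S : Finset (α ⊕ ι), IsDomSet (incGraph B) S ∧ S.card ≤ 15 := by
  classical
  obtain ⟨I6, hI6card, hI6ind⟩ := STS14.indep6 B hv hblock hpair
  obtain ⟨z, hzI, hz1⟩ := STS14.averaging B hv hblock hpair I6 hI6ind (by omega) (by omega)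
  have onecase : ∀ (J : Finset α), J.card ≤ 8 → 7 ≤ J.card →
      (univ.filter fun i => B i ⊆ J).card = 1 →
      ∃ S : Finset (α ⊕ ι), IsDomSet (incGraph B) S ∧ S.card ≤ 15 := by
    intro J hJ8 hJ7 hone
    obtain ⟨i0, hi0⟩ := Finset.card_eq_one.mp hone
    have hi0mem : i0 ∈ univ.filter fun i => B i ⊆ J := hi0 ▸ Finset.mem_singleton_self i0
    have hB0J : B i0 ⊆ J := (Finset.mem_filter.mp hi0mem).2
    have hQcard : (J \ B i0).card = J.card - 3 := by
      rw [Finset.card_sdiff_of_subset hB0J, hblock]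
    obtain ⟨C, hCcard, hCcov⟩ := STS14.cover_lemma B hv hpair (J \ B i0).card (J \ B i0) le_rfl
    obtain ⟨S, hSdom, hScard⟩ := STS14.assemble B hv J {i0} C
      (fun i hi => by
        have : i ∈ univ.filter fun i => B i ⊆ J := Finset.mem_filter.mpr ⟨Finset.mem_univ _, hi⟩
        rw [hi0] at this
        exact this)
      (fun p hp => by
        by_cases hpB : p ∈ B i0
        · exact ⟨i0, Finset.mem_union_left _ (Finset.mem_singleton_self i0), hpB⟩
        · obtain ⟨j, hj, hpj⟩ := hCcov p (Finset.mem_sdiff.mpr ⟨hp, hpB⟩)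
          exact ⟨j, Finset.mem_union_right _ hj, hpj⟩)
    refine ⟨S, hSdom, le_trans hScard ?_⟩
    simp only [Finset.card_singleton]
    omega
  have hz1' : (univ.filter fun i => B i ⊆ insert z I6).card = 0 ∨
      (univ.filter fun i => B i ⊆ insert z I6).card = 1 := by omega
  have hJ7card : (insert z I6).card = 7 := by
    rw [Finset.card_insert_of_notMem hzI, hI6card]
  rcases hz1' with h0 | h1
  · set I7 := insert z I6 with hI7
    have hI7ind : ∀ i, ¬ B i ⊆ I7 := by
      intro i hi
      have : i ∈ univ.filter fun i => B i ⊆ I7 := Finset.mem_filter.mpr ⟨Finset.mem_univ _, hi⟩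
      rw [Finset.card_eq_zero.mp h0] at this
      exact absurd this (Finset.notMem_empty i)
    obtain ⟨z', hz'I, hz'1⟩ := STS14.averaging B hv hblock hpair I7 hI7ind (by omega) (by omega)
    have hJ8card : (insert z' I7).card = 8 := by
      rw [Finset.card_insert_of_notMem hz'I, hJ7card]
    have hz'1' : (univ.filter fun i => B i ⊆ insert z' I7).card = 0 ∨
        (univ.filter fun i => B i ⊆ insert z' I7).card = 1 := by omega
    rcases hz'1' with h0' | h1'
    · obtain ⟨C, hCcard, hCcov⟩ :=
        STS14.cover_lemma B hv hpair (insert z' I7).card (insert z' I7) le_rfl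
      obtain ⟨S, hSdom, hScard⟩ := STS14.assemble B hv (insert z' I7) ∅ C
        (fun i hi => by
          have : i ∈ univ.filter fun i => B i ⊆ insert z' I7 :=
            Finset.mem_filter.mpr ⟨Finset.mem_univ _, hi⟩
          rw [Finset.card_eq_zero.mp h0'] at this
          exact absurd this (Finset.notMem_empty i))
        (fun p hp => by
          obtain ⟨j, hj, hpj⟩ := hCcov p hp
          exact ⟨j, Finset.mem_union_right _ hj, hpj⟩)
      refine ⟨S, hSdom, le_trans hScard ?_⟩
      rw [hJ8card] at hCcard ⊢
      simp only [Finset.card_empty]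
      omega
    · exact onecase (insert z' I7) (by omega) (by omega) h1'
  · exact onecase (insert z I6) (by omega) (by omega) h1

/-- For a Steiner triple system on `19` points (a `(19,3,1)`-design),
`12 ≤ γ(D) ≤ 15`. -/
theorem stmt14 [Fintype α] [Fintype ι] [DecidableEq α]
    (B : ι → Finset α)
    (hv : Fintype.card α = 19)
    (hblock : ∀ i, (B i).card = 3)
    (hpair : ∀ x y : α, x ≠ y →
      (Finset.univ.filter fun i => x ∈ B i ∧ y ∈ B i).card = 1) :
    12 ≤ domNum (incGraph B) ∧ domNum (incGraph B) ≤ 15 := by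
  constructor
  · apply le_csInf
    · exact ⟨(univ : Finset (α ⊕ ι)).card,
        (univ : Finset (α ⊕ ι)), fun v hv' => absurd (Finset.mem_univ v) hv', rfl⟩
    · rintro n ⟨S, hS, rfl⟩
      exact STS14.lower_bound B hv hblock hpair S hS
  · obtain ⟨S, hS, hc⟩ := STS14.upper_ex B hv hblock hpair
    exact le_trans (Nat.sInf_le ⟨S, hS, rfl⟩) hc
end

section
/- Let D be a Steiner triple system on v points (a (v,3,1)-design). Then γ(D) ≤ v - √(v/2), i.e., (γ(D) : ℝ) ≤ v - Real.sqrt (v/2). -/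
open Finset

variable {α ι : Type*}

section Aux

variable {α ι : Type*} [Fintype α] [Fintype ι] [DecidableEq α] (B : ι → Finset α)

lemma ex_block
    (hpair : ∀ x y : α, x ≠ y →
      (Finset.univ.filter fun i => x ∈ B i ∧ y ∈ B i).card = 1)
    {x y : α} (hxy : x ≠ y) :
    ∃ i, x ∈ B i ∧ y ∈ B i ∧ ∀ j, x ∈ B j → y ∈ B j → j = i := by
  obtain ⟨i, hi⟩ := Finset.card_eq_one.mp (hpair x y hxy)
  have hmem : i ∈ Finset.univ.filter fun j => x ∈ B j ∧ y ∈ B j := by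
    rw [hi]; exact Finset.mem_singleton_self i
  rw [Finset.mem_filter] at hmem
  refine ⟨i, hmem.2.1, hmem.2.2, fun j hx hy => ?_⟩
  have : j ∈ Finset.univ.filter fun j => x ∈ B j ∧ y ∈ B j := by
    rw [Finset.mem_filter]; exact ⟨Finset.mem_univ _, hx, hy⟩
  rw [hi, Finset.mem_singleton] at this
  exact this

lemma indep_exists
    (hblock : ∀ i, (B i).card = 3)
    (hpair : ∀ x y : α, x ≠ y →
      (Finset.univ.filter fun i => x ∈ B i ∧ y ∈ B i).card = 1)
    (v : ℕ) (hv : Fintype.card α = v) :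
    ∀ n, n * (n - 1) < 2 * v → ∃ A : Finset α, A.card = n ∧ ∀ i, ¬ B i ⊆ A := by
  classical
  intro n
  induction n with
  | zero =>
    intro _
    refine ⟨∅, Finset.card_empty, fun i h => ?_⟩
    have h1 := Finset.card_le_card h
    rw [hblock i, Finset.card_empty] at h1
    omega
  | succ n ih =>
    intro h
    rw [Nat.add_sub_cancel] at h
    have hn : n * (n - 1) < 2 * v := by
      have : n * (n - 1) ≤ (n + 1) * n := Nat.mul_le_mul (Nat.le_succ n) (Nat.sub_le n 1)
      omega
    obtain ⟨A, hAcard, hAind⟩ := ih hn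
    -- bad set
    set bad : Finset α :=
      A ∪ (A.powersetCard 2).biUnion
        (fun p => (Finset.univ.filter fun i => p ⊆ B i).biUnion (fun i => B i \ p)) with hbad
    have hthird : ∀ p ∈ A.powersetCard 2,
        ((Finset.univ.filter fun i => p ⊆ B i).biUnion (fun i => B i \ p)).card ≤ 1 := by
      intro p hp
      rw [Finset.mem_powersetCard] at hp
      obtain ⟨a, b, hab, rfl⟩ := Finset.card_eq_two.mp hp.2
      have ha : a ∈ A := hp.1 (by simp)
      have hb : b ∈ A := hp.1 (by simp)
      obtain ⟨i0, hx0, hy0, huniq⟩ := ex_block B hpair hab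
      have hfil : (Finset.univ.filter fun i => ({a, b} : Finset α) ⊆ B i) = {i0} := by
        ext j
        simp only [Finset.mem_filter, Finset.mem_univ, true_and, Finset.mem_singleton,
          Finset.insert_subset_iff, Finset.singleton_subset_iff]
        constructor
        · rintro ⟨h1, h2⟩; exact huniq j h1 h2
        · rintro rfl; exact ⟨hx0, hy0⟩
      rw [hfil, Finset.singleton_biUnion]
      have hsub : ({a, b} : Finset α) ⊆ B i0 := by
        rw [Finset.insert_subset_iff, Finset.singleton_subset_iff]; exact ⟨hx0, hy0⟩
      rw [Finset.card_sdiff_of_subset hsub, hblock i0, hp.2]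
    have hbadcard : bad.card ≤ n + n * (n - 1) / 2 := by
      have h1 : bad.card ≤ A.card +
          ((A.powersetCard 2).biUnion
            (fun p => (Finset.univ.filter fun i => p ⊆ B i).biUnion (fun i => B i \ p))).card :=
        Finset.card_union_le _ _
      have h2 : ((A.powersetCard 2).biUnion
            (fun p => (Finset.univ.filter fun i => p ⊆ B i).biUnion (fun i => B i \ p))).card
          ≤ (A.powersetCard 2).card * 1 := by
        apply le_trans (Finset.card_biUnion_le)
        apply le_trans (Finset.sum_le_card_nsmul _ _ 1 hthird)
        simp
      have h3 : (A.powersetCard 2).card = n * (n - 1) / 2 := by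
        rw [Finset.card_powersetCard, hAcard, Nat.choose_two_right]
      omega
    have hbadlt : bad.card < v := by
      have ht : n * (n - 1) / 2 * 2 ≤ n * (n - 1) := Nat.div_mul_le_self _ _
      have he : (n + 1) * n = n * (n - 1) + 2 * n := by
        rcases n with _ | k
        · rfl
        · simp only [Nat.succ_sub_one]; ring
      omega
    have hex : ∃ x, x ∈ Finset.univ ∧ x ∉ bad := by
      by_contra hc
      push_neg at hc
      have : Finset.univ ⊆ bad := fun x hx => hc x hx
      have := Finset.card_le_card this
      rw [Finset.card_univ, hv] at this
      omega
    obtain ⟨x, -, hxbad⟩ := hex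
    have hxA : x ∉ A := fun h => hxbad (Finset.mem_union_left _ h)
    refine ⟨insert x A, by rw [Finset.card_insert_of_notMem hxA, hAcard], ?_⟩
    intro i hi
    by_cases hxB : x ∈ B i
    · -- derive x ∈ bad
      apply hxbad
      have hpA : B i \ {x} ⊆ A := by
        intro z hz
        rw [Finset.mem_sdiff, Finset.mem_singleton] at hz
        have := hi hz.1
        rw [Finset.mem_insert] at this
        exact this.resolve_left hz.2
      have hpcard : (B i \ {x}).card = 2 := by
        rw [Finset.card_sdiff_of_subset (by simpa using hxB), hblock i, Finset.card_singleton]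
      apply Finset.mem_union_right
      rw [Finset.mem_biUnion]
      refine ⟨B i \ {x}, ?_, ?_⟩
      · rw [Finset.mem_powersetCard]; exact ⟨hpA, hpcard⟩
      · rw [Finset.mem_biUnion]
        refine ⟨i, ?_, ?_⟩
        · rw [Finset.mem_filter]; exact ⟨Finset.mem_univ _, Finset.sdiff_subset⟩
        · rw [Finset.mem_sdiff]; exact ⟨hxB, by simp⟩
    · exact hAind i (fun z hz => ((Finset.mem_insert.mp (hi hz)).resolve_left
        (fun h => hxB (h ▸ hz))))

lemma pair_cover
    (hpair : ∀ x y : α, x ≠ y →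
      (Finset.univ.filter fun i => x ∈ B i ∧ y ∈ B i).card = 1) :
    ∀ n (W : Finset α), W.card = 2 * n →
      ∃ F : Finset ι, F.card ≤ n ∧ ∀ x ∈ W, ∃ i ∈ F, x ∈ B i := by
  classical
  intro n
  induction n with
  | zero =>
    intro W hW
    refine ⟨∅, le_refl _, fun x hx => absurd hx ?_⟩
    rw [Finset.card_eq_zero.mp hW]
    simp
  | succ n ih =>
    intro W hW
    have hx : ∃ x, x ∈ W := (Finset.card_pos.mp (by omega : 0 < W.card))
    obtain ⟨x, hxW⟩ := hx
    have hy : ∃ y, y ∈ W \ {x} := by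
      apply Finset.card_pos.mp
      rw [Finset.card_sdiff_of_subset (by simpa using hxW)]
      simp; omega
    obtain ⟨y, hyW⟩ := hy
    rw [Finset.mem_sdiff, Finset.mem_singleton] at hyW
    have hxy : x ≠ y := fun h => hyW.2 h.symm
    obtain ⟨i0, hxi, hyi, -⟩ := ex_block B hpair hxy
    have hsub : ({x, y} : Finset α) ⊆ W := by
      rw [Finset.insert_subset_iff, Finset.singleton_subset_iff]; exact ⟨hxW, hyW.1⟩
    have hW' : (W \ {x, y}).card = 2 * n := by
      rw [Finset.card_sdiff_of_subset hsub, Finset.card_insert_of_notMem (by simpa using hxy),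
        Finset.card_singleton, hW]
      omega
    obtain ⟨F, hFcard, hFcov⟩ := ih (W \ {x, y}) hW'
    refine ⟨insert i0 F, le_trans (Finset.card_insert_le _ _) (by omega), ?_⟩
    intro z hz
    by_cases hzxy : z ∈ ({x, y} : Finset α)
    · refine ⟨i0, Finset.mem_insert_self _ _, ?_⟩
      rcases Finset.mem_insert.mp hzxy with rfl | h
      · exact hxi
      · rw [Finset.mem_singleton] at h; exact h ▸ hyi
    · obtain ⟨i, hiF, hiB⟩ := hFcov z (Finset.mem_sdiff.mpr ⟨hz, hzxy⟩)
      exact ⟨i, Finset.mem_insert_of_mem hiF, hiB⟩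

lemma main_cover
    (hblock : ∀ i, (B i).card = 3)
    (hpair : ∀ x y : α, x ≠ y →
      (Finset.univ.filter fun i => x ∈ B i ∧ y ∈ B i).card = 1)
    {A : Finset α} {m : ℕ} (hm : 1 ≤ m) (hA : A.card = 2 * m)
    (hind : ∀ i, ¬ B i ⊆ A) :
    ∃ (c : α) (F : Finset ι), c ∉ A ∧ F.card ≤ m ∧
      (∀ x ∈ insert c A, ∃ i ∈ F, x ∈ B i) ∧
      (∀ i, B i ⊆ insert c A → i ∈ F) := by
  classical
  -- pick two distinct points of A
  have h2 : 1 < A.card := by omega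
  obtain ⟨x, hxA, y, hyA, hxy⟩ := Finset.one_lt_card.mp h2
  obtain ⟨i0, hxi, hyi, -⟩ := ex_block B hpair hxy
  -- the third point c of the block through x,y
  have hsub : ({x, y} : Finset α) ⊆ B i0 := by
    rw [Finset.insert_subset_iff, Finset.singleton_subset_iff]; exact ⟨hxi, hyi⟩
  have hcard1 : (B i0 \ {x, y}).card = 1 := by
    rw [Finset.card_sdiff_of_subset hsub, hblock i0,
      Finset.card_insert_of_notMem (by simpa using hxy), Finset.card_singleton]
  obtain ⟨c, hc⟩ := Finset.card_eq_one.mp hcard1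
  have hcB : c ∈ B i0 := by
    have : c ∈ B i0 \ {x, y} := hc ▸ Finset.mem_singleton_self c
    exact (Finset.mem_sdiff.mp this).1
  have hcxy : c ∉ ({x, y} : Finset α) := by
    have : c ∈ B i0 \ {x, y} := hc ▸ Finset.mem_singleton_self c
    exact (Finset.mem_sdiff.mp this).2
  have hBi0 : B i0 \ {c} ⊆ A := by
    intro z hz
    rw [Finset.mem_sdiff, Finset.mem_singleton] at hz
    have : z ∉ B i0 \ ({x, y} : Finset α) := by
      rw [hc, Finset.mem_singleton]; exact hz.2
    have hzxy : z ∈ ({x, y} : Finset α) := by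
      by_contra hzz
      exact this (Finset.mem_sdiff.mpr ⟨hz.1, hzz⟩)
    rcases Finset.mem_insert.mp hzxy with rfl | h
    · exact hxA
    · rw [Finset.mem_singleton] at h; exact h ▸ hyA
  have hcA : c ∉ A := by
    intro hcA
    apply hind i0
    intro z hz
    by_cases hzc : z = c
    · exact hzc ▸ hcA
    · exact hBi0 (Finset.mem_sdiff.mpr ⟨hz, by simpa using hzc⟩)
  -- the set T of blocks through c with both other points in A
  set T : Finset ι := Finset.univ.filter (fun i => c ∈ B i ∧ B i \ {c} ⊆ A) with hT
  have hi0T : i0 ∈ T := by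
    rw [hT, Finset.mem_filter]; exact ⟨Finset.mem_univ _, hcB, hBi0⟩
  set U : Finset α := T.biUnion (fun i => B i \ {c}) with hU
  have hdisj : ∀ i ∈ T, ∀ j ∈ T, i ≠ j → Disjoint (B i \ {c}) (B j \ {c}) := by
    intro i hiT j hjT hij
    rw [Finset.disjoint_left]
    intro z hzi hzj
    rw [Finset.mem_sdiff, Finset.mem_singleton] at hzi hzj
    rw [hT, Finset.mem_filter] at hiT hjT
    obtain ⟨k, -, -, huniq⟩ := ex_block B hpair (show z ≠ c from hzi.2)
    exact hij ((huniq i hzi.1 hiT.2.1).trans (huniq j hzj.1 hjT.2.1).symm)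
  have hUcard : U.card = 2 * T.card := by
    rw [hU, Finset.card_biUnion hdisj]
    rw [Finset.sum_congr rfl (fun i hiT => ?_), Finset.sum_const, smul_eq_mul, mul_comm]
    rw [hT, Finset.mem_filter] at hiT
    rw [Finset.card_sdiff_of_subset (Finset.singleton_subset_iff.mpr hiT.2.1), hblock i,
      Finset.card_singleton]
  have hUA : U ⊆ A := by
    intro z hz
    rw [hU, Finset.mem_biUnion] at hz
    obtain ⟨i, hiT, hzi⟩ := hz
    rw [hT, Finset.mem_filter] at hiT
    exact hiT.2.2 hzi
  have hTm : T.card ≤ m := by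
    have := Finset.card_le_card hUA
    omega
  have hA'card : (A \ U).card = 2 * (m - T.card) := by
    rw [Finset.card_sdiff_of_subset hUA, hA, hUcard]
    omega
  obtain ⟨F1, hF1card, hF1cov⟩ := pair_cover B hpair (m - T.card) (A \ U) hA'card
  refine ⟨c, T ∪ F1, hcA, ?_, ?_, ?_⟩
  · have := Finset.card_union_le T F1
    omega
  · intro z hz
    rcases Finset.mem_insert.mp hz with rfl | hzA
    · exact ⟨i0, Finset.mem_union_left _ hi0T, hcB⟩
    · by_cases hzU : z ∈ U
      · rw [hU, Finset.mem_biUnion] at hzU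
        obtain ⟨i, hiT, hzi⟩ := hzU
        exact ⟨i, Finset.mem_union_left _ hiT, (Finset.mem_sdiff.mp hzi).1⟩
      · obtain ⟨i, hiF, hiB⟩ := hF1cov z (Finset.mem_sdiff.mpr ⟨hzA, hzU⟩)
        exact ⟨i, Finset.mem_union_right _ hiF, hiB⟩
  · intro i hi
    by_cases hci : c ∈ B i
    · apply Finset.mem_union_left
      rw [hT, Finset.mem_filter]
      refine ⟨Finset.mem_univ _, hci, ?_⟩
      intro z hz
      rw [Finset.mem_sdiff, Finset.mem_singleton] at hz
      exact (Finset.mem_insert.mp (hi hz.1)).resolve_left hz.2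
    · exact absurd (fun z hz => (Finset.mem_insert.mp (hi hz)).resolve_left
        (fun h => hci (h ▸ hz))) (hind i)

lemma dom_le
    {R : Finset α} {F : Finset ι}
    (hcov : ∀ x ∈ R, ∃ i ∈ F, x ∈ B i)
    (hcl : ∀ i, B i ⊆ R → i ∈ F) :
    domNum (incGraph B) ≤ (Fintype.card α - R.card) + F.card := by
  classical
  set S : Finset (α ⊕ ι) := ((Finset.univ \ R).image Sum.inl) ∪ (F.image Sum.inr) with hS
  have hmemS : ∀ w : α ⊕ ι, w ∈ S ↔
      (∃ x, x ∉ R ∧ w = Sum.inl x) ∨ (∃ i, i ∈ F ∧ w = Sum.inr i) := by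
    intro w
    rw [hS, Finset.mem_union, Finset.mem_image, Finset.mem_image]
    constructor
    · rintro (⟨x, hx, rfl⟩ | ⟨i, hi, rfl⟩)
      · exact Or.inl ⟨x, (Finset.mem_sdiff.mp hx).2, rfl⟩
      · exact Or.inr ⟨i, hi, rfl⟩
    · rintro (⟨x, hx, rfl⟩ | ⟨i, hi, rfl⟩)
      · exact Or.inl ⟨x, Finset.mem_sdiff.mpr ⟨Finset.mem_univ _, hx⟩, rfl⟩
      · exact Or.inr ⟨i, hi, rfl⟩
  have hdom : IsDomSet (incGraph B) S := by
    intro w hw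
    rcases w with x | i
    · have hxR : x ∈ R := by
        by_contra hx
        exact hw ((hmemS _).mpr (Or.inl ⟨x, hx, rfl⟩))
      obtain ⟨i, hiF, hxB⟩ := hcov x hxR
      exact ⟨Sum.inr i, (hmemS _).mpr (Or.inr ⟨i, hiF, rfl⟩),
        Or.inl ⟨x, i, rfl, rfl, hxB⟩⟩
    · have hiF : i ∉ F := by
        intro hi
        exact hw ((hmemS _).mpr (Or.inr ⟨i, hi, rfl⟩))
      have : ¬ B i ⊆ R := fun h => hiF (hcl i h)
      obtain ⟨z, hzB, hzR⟩ := Finset.not_subset.mp this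
      exact ⟨Sum.inl z, (hmemS _).mpr (Or.inl ⟨z, hzR, rfl⟩),
        Or.inr ⟨z, i, rfl, rfl, hzB⟩⟩
  have hcard : S.card = (Fintype.card α - R.card) + F.card := by
    rw [hS, Finset.card_union_of_disjoint, Finset.card_image_of_injective _ Sum.inl_injective,
      Finset.card_image_of_injective _ Sum.inr_injective,
      Finset.card_sdiff_of_subset (Finset.subset_univ R), Finset.card_univ]
    rw [Finset.disjoint_left]
    rintro w hw1 hw2
    obtain ⟨x, -, rfl⟩ := Finset.mem_image.mp hw1
    obtain ⟨i, -, h⟩ := Finset.mem_image.mp hw2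
    exact Sum.inl_ne_inr h.symm
  have : (Fintype.card α - R.card) + F.card ∈
      {n | ∃ S : Finset (α ⊕ ι), IsDomSet (incGraph B) S ∧ S.card = n} :=
    ⟨S, hdom, hcard⟩
  exact Nat.sInf_le this

end Aux

/-- For a Steiner triple system on `v` points (a `(v,3,1)`-design),
`γ(D) ≤ v - √(v/2)`. -/
theorem stmt15 [Fintype α] [Fintype ι] [DecidableEq α]
    (B : ι → Finset α) (v : ℕ)
    (hv : Fintype.card α = v) (hkv : 3 < v)
    (hblock : ∀ i, (B i).card = 3)
    (hpair : ∀ x y : α, x ≠ y →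
      (Finset.univ.filter fun i => x ∈ B i ∧ y ∈ B i).card = 1) :
    (domNum (incGraph B) : ℝ) ≤ (v : ℝ) - Real.sqrt ((v : ℝ) / 2) := by
  classical
  set m : ℕ := Nat.sqrt ((v - 1) / 2) with hm
  have hq1 : 1 ≤ (v - 1) / 2 := by omega
  have hm1 : 1 ≤ m := by
    rw [hm]
    exact Nat.le_sqrt.mpr (by omega)
  have hmsq : m * m ≤ (v - 1) / 2 := by
    have := Nat.sqrt_le' ((v - 1) / 2)
    rw [pow_two] at this
    rw [hm]; exact this
  have hmv : 2 * (m * m) ≤ v - 1 := by omega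
  -- build independent set of size 2m
  have hfeas : 2 * m * (2 * m - 1) < 2 * v := by
    have h1 : 2 * m * (2 * m - 1) ≤ 2 * m * (2 * m) := Nat.mul_le_mul_left _ (Nat.sub_le _ _)
    have h2 : 2 * m * (2 * m) = 4 * (m * m) := by ring
    omega
  obtain ⟨A, hAcard, hAind⟩ := indep_exists B hblock hpair v hv (2 * m) hfeas
  obtain ⟨c, F, hcA, hFcard, hcov, hcl⟩ := main_cover B hblock hpair hm1 hAcard hAind
  have hRcard : (insert c A).card = 2 * m + 1 := by
    rw [Finset.card_insert_of_notMem hcA, hAcard]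
  have hdle := dom_le B hcov hcl
  rw [hv, hRcard] at hdle
  have h2m1 : 2 * m + 1 ≤ v := by
    have : m ≤ m * m := Nat.le_mul_of_pos_left m (by omega)
    omega
  have hNnat : domNum (incGraph B) + (m + 1) ≤ v := by omega
  -- the sqrt bound
  have hvle : v ≤ 2 * ((m + 1) * (m + 1)) := by
    have := Nat.lt_succ_sqrt ((v - 1) / 2)
    have h' : (v - 1) / 2 < (m + 1) * (m + 1) := by
      rw [hm]; exact Nat.lt_succ_sqrt _
    omega
  have hsqrt : Real.sqrt ((v : ℝ) / 2) ≤ (m : ℝ) + 1 := by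
    have h1 : (v : ℝ) / 2 ≤ ((m : ℝ) + 1) ^ 2 := by
      have : (v : ℝ) ≤ 2 * ((m : ℝ) + 1) * ((m : ℝ) + 1) := by
        have := hvle
        push_cast [← Nat.cast_le (α := ℝ)] at this ⊢
        nlinarith [this]
      nlinarith
    calc Real.sqrt ((v : ℝ) / 2) ≤ Real.sqrt (((m : ℝ) + 1) ^ 2) := Real.sqrt_le_sqrt h1
      _ = (m : ℝ) + 1 := Real.sqrt_sq (by positivity)
  have hNreal : (domNum (incGraph B) : ℝ) + ((m : ℝ) + 1) ≤ v := by
    have := hNnat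
    push_cast [← Nat.cast_le (α := ℝ)] at this
    push_cast
    linarith
  linarith
end

section
/- Let D be a symmetric (v,k,λ)-design, i.e., a (v,k,λ)-design whose number of blocks b equals v. Then γ(D) ≤ 2(k - λ + 1). -/
open Finset

variable {α ι : Type*}

private lemma count_swap {ι β : Type*} [Fintype ι] [Fintype β]
    (p : ι → β → Prop) [∀ i b, Decidable (p i b)] :
    ∑ i, (univ.filter fun b => p i b).card = ∑ b, (univ.filter fun i => p i b).card := by
  simp only [Finset.card_filter]
  exact Finset.sum_comm

/-- For a symmetric `(v,k,λ)`-design (one whose number of blocks equals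
`v`), `γ(D) ≤ 2(k - λ + 1)`. -/
theorem stmt18 [Fintype α] [Fintype ι] [DecidableEq α]
    (B : ι → Finset α) (v k l : ℕ)
    (hv : Fintype.card α = v)
    (hk2 : 2 ≤ k) (hkv : k < v) (hl : 1 ≤ l)
    (hblock : ∀ i, (B i).card = k)
    (hpair : ∀ x y : α, x ≠ y →
      (Finset.univ.filter fun i => x ∈ B i ∧ y ∈ B i).card = l)
    (hsym : Fintype.card ι = v) :
    domNum (incGraph B) ≤ 2 * (k - l + 1) := by
  classical
  set r : α → ℕ := fun x => (univ.filter fun i => x ∈ B i).card with hrdef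
  -- Step 1: replication count
  have step1 : ∀ x : α, r x * (k - 1) = (v - 1) * l := by
    intro x
    have hswap := count_swap (fun i y => x ∈ B i ∧ y ∈ B i ∧ y ≠ x)
    have hL : ∑ i, (univ.filter fun y => x ∈ B i ∧ y ∈ B i ∧ y ≠ x).card = r x * (k - 1) := by
      have hfib : ∀ i : ι, (univ.filter fun y => x ∈ B i ∧ y ∈ B i ∧ y ≠ x).card
          = if x ∈ B i then k - 1 else 0 := by
        intro i
        by_cases hx : x ∈ B i
        · have heq : (univ.filter fun y => x ∈ B i ∧ y ∈ B i ∧ y ≠ x) = (B i).erase x := by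
            ext y; simp [hx, Finset.mem_erase, and_comm]
          rw [heq, if_pos hx, Finset.card_erase_of_mem hx, hblock]
        · have heq : (univ.filter fun y => x ∈ B i ∧ y ∈ B i ∧ y ≠ x) = ∅ := by
            ext y; simp [hx]
          rw [heq, if_neg hx]; rfl
      rw [Finset.sum_congr rfl fun i _ => hfib i, ← Finset.sum_filter, Finset.sum_const,
        smul_eq_mul]
    have hR : ∑ y, (univ.filter fun i => x ∈ B i ∧ y ∈ B i ∧ y ≠ x).card = (v - 1) * l := by
      have hx0 : (univ.filter fun i => x ∈ B i ∧ x ∈ B i ∧ x ≠ x).card = 0 := by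
        simp
      have h1 : ∀ y ∈ univ.erase x,
          (univ.filter fun i => x ∈ B i ∧ y ∈ B i ∧ y ≠ x).card = l := by
        intro y hy
        have hyx : y ≠ x := (Finset.mem_erase.mp hy).1
        have heq : (univ.filter fun i => x ∈ B i ∧ y ∈ B i ∧ y ≠ x)
            = univ.filter fun i => x ∈ B i ∧ y ∈ B i := by
          ext i; simp [hyx]
        rw [heq, hpair x y (Ne.symm hyx)]
      rw [← Finset.sum_erase_add _ _ (Finset.mem_univ x), hx0, add_zero,
        Finset.sum_congr rfl h1, Finset.sum_const, smul_eq_mul,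
        Finset.card_erase_of_mem (Finset.mem_univ x), Finset.card_univ, hv]
    rw [← hL, hswap, hR]
  -- Step 2: sum of replications
  have step2 : ∑ x : α, r x = v * k := by
    have hswap := count_swap (fun x (i : ι) => x ∈ B i)
    have : ∑ i : ι, (univ.filter fun x => x ∈ B i).card = v * k := by
      have : ∀ i : ι, (univ.filter fun x => x ∈ B i).card = k := by
        intro i
        rw [show (univ.filter fun x => x ∈ B i) = B i from Finset.filter_univ_mem (B i), hblock]
      rw [Finset.sum_congr rfl fun i _ => this i, Finset.sum_const, smul_eq_mul,
        Finset.card_univ, hsym]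
    rw [hrdef]; rw [hswap, this]
  -- Step 3: r x = k for all x
  have hα : Nonempty α := Fintype.card_pos_iff.mp (by omega)
  obtain ⟨x₀⟩ := hα
  have hconst : ∀ x : α, r x = r x₀ := by
    intro x
    exact Nat.eq_of_mul_eq_mul_right (by omega) ((step1 x).trans (step1 x₀).symm)
  have hrx0 : r x₀ = k := by
    have : ∑ x : α, r x = v * r x₀ := by
      rw [Finset.sum_congr rfl fun x _ => hconst x, Finset.sum_const, smul_eq_mul,
        Finset.card_univ, hv]
    rw [step2] at this
    exact (Nat.eq_of_mul_eq_mul_left (by omega) this.symm)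
  have step3 : ∀ x : α, r x = k := fun x => (hconst x).trans hrx0
  -- Step 4
  have step4 : (v - 1) * l = k * (k - 1) := by
    rw [← step1 x₀, step3 x₀]
  -- l ≤ k - 1
  have hlk : l ≤ k - 1 := by
    have h1 : k * l ≤ (v - 1) * l := Nat.mul_le_mul_right _ (by omega)
    rw [step4] at h1
    exact Nat.le_of_mul_le_mul_left h1 (by omega)
  -- Step 6: dual intersection property
  have dual : ∀ j i : ι, i ≠ j → (B i ∩ B j).card = l := by
    intro j
    set M : ι → ℕ := fun i => (B i ∩ B j).card with hMdef
    have hS1 : ∑ i : ι, M i = k * k := by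
      have hswap := count_swap (fun i y => y ∈ B i ∧ y ∈ B j)
      have hL : ∀ i : ι, (univ.filter fun y => y ∈ B i ∧ y ∈ B j).card = M i := by
        intro i; congr 1; ext y; simp [Finset.mem_inter]
      have hR : ∑ y, (univ.filter fun i => y ∈ B i ∧ y ∈ B j).card = k * k := by
        have hfib : ∀ y : α, (univ.filter fun i => y ∈ B i ∧ y ∈ B j).card
            = if y ∈ B j then r y else 0 := by
          intro y
          by_cases hy : y ∈ B j
          · rw [if_pos hy]; congr 1; ext i; simp [hy]
          · rw [if_neg hy]
            have : (univ.filter fun i => y ∈ B i ∧ y ∈ B j) = ∅ := by ext i; simp [hy]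
            rw [this]; rfl
        rw [Finset.sum_congr rfl fun y _ => hfib y, ← Finset.sum_filter,
          Finset.filter_univ_mem, Finset.sum_congr rfl fun y _ => step3 y,
          Finset.sum_const, smul_eq_mul, hblock]
      calc ∑ i : ι, M i = ∑ i : ι, (univ.filter fun y => y ∈ B i ∧ y ∈ B j).card :=
            Finset.sum_congr rfl fun i _ => (hL i).symm
        _ = _ := hswap
        _ = k * k := hR
    have hS2 : ∑ i : ι, M i * M i = k * (k * l + (k - l)) := by
      have hswap := count_swap
        (fun i (yz : α × α) => (yz.1 ∈ B i ∧ yz.1 ∈ B j) ∧ (yz.2 ∈ B i ∧ yz.2 ∈ B j))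
      have hL : ∀ i : ι, (univ.filter fun yz : α × α =>
          (yz.1 ∈ B i ∧ yz.1 ∈ B j) ∧ (yz.2 ∈ B i ∧ yz.2 ∈ B j)).card = M i * M i := by
        intro i
        have heq : (univ.filter fun yz : α × α =>
            (yz.1 ∈ B i ∧ yz.1 ∈ B j) ∧ (yz.2 ∈ B i ∧ yz.2 ∈ B j))
            = (B i ∩ B j) ×ˢ (B i ∩ B j) := by
          ext ⟨y, z⟩; simp [Finset.mem_product, Finset.mem_inter]
        rw [heq, Finset.card_product]
      have hR : ∑ yz : α × α, (univ.filter fun i =>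
          (yz.1 ∈ B i ∧ yz.1 ∈ B j) ∧ (yz.2 ∈ B i ∧ yz.2 ∈ B j)).card
          = k * (k * l + (k - l)) := by
        have hfib : ∀ yz : α × α, (univ.filter fun i =>
            (yz.1 ∈ B i ∧ yz.1 ∈ B j) ∧ (yz.2 ∈ B i ∧ yz.2 ∈ B j)).card
            = if yz.1 ∈ B j ∧ yz.2 ∈ B j then (if yz.1 = yz.2 then k else l) else 0 := by
          rintro ⟨y, z⟩
          by_cases hyz : y ∈ B j ∧ z ∈ B j
          · rw [if_pos hyz]
            by_cases he : y = z
            · subst he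
              rw [if_pos rfl]
              have heq : (univ.filter fun i => (y ∈ B i ∧ y ∈ B j) ∧ (y ∈ B i ∧ y ∈ B j))
                  = univ.filter fun i => y ∈ B i := by
                ext i; simp [hyz.1]
              rw [heq]; exact step3 y
            · rw [if_neg he]
              have heq : (univ.filter fun i => (y ∈ B i ∧ y ∈ B j) ∧ (z ∈ B i ∧ z ∈ B j))
                  = univ.filter fun i => y ∈ B i ∧ z ∈ B i := by
                ext i; simp [hyz.1, hyz.2]
              rw [heq, hpair y z he]
          · rw [if_neg hyz]
            have heq : (univ.filter fun i => (y ∈ B i ∧ y ∈ B j) ∧ (z ∈ B i ∧ z ∈ B j)) = ∅ := by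
              ext i; simp only [Finset.mem_filter, Finset.mem_univ, true_and,
                Finset.notMem_empty, iff_false]
              tauto
            rw [heq]; rfl
        rw [Finset.sum_congr rfl fun yz _ => hfib yz, ← Finset.sum_filter]
        have hprod : (univ.filter fun yz : α × α => yz.1 ∈ B j ∧ yz.2 ∈ B j)
            = B j ×ˢ B j := by
          ext ⟨y, z⟩; simp [Finset.mem_product]
        rw [hprod, Finset.sum_product]
        have hinner : ∀ y ∈ B j, (∑ z ∈ B j, if y = z then k else l) = k * l + (k - l) := by
          intro y hy
          have hsplit : ∀ z : α, (if y = z then k else l) = l + (if y = z then k - l else 0) := by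
            intro z
            by_cases hz : y = z
            · simp only [if_pos hz]; omega
            · simp only [if_neg hz, add_zero]
          rw [Finset.sum_congr rfl fun z _ => hsplit z, Finset.sum_add_distrib,
            Finset.sum_const, smul_eq_mul, hblock, Finset.sum_ite_eq, if_pos hy]
        rw [Finset.sum_congr rfl hinner, Finset.sum_const, smul_eq_mul, hblock]
      calc ∑ i : ι, M i * M i
            = ∑ i : ι, (univ.filter fun yz : α × α =>
              (yz.1 ∈ B i ∧ yz.1 ∈ B j) ∧ (yz.2 ∈ B i ∧ yz.2 ∈ B j)).card :=
            Finset.sum_congr rfl fun i _ => (hL i).symm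
        _ = _ := hswap
        _ = k * (k * l + (k - l)) := hR
    -- pass to integers
    have hcast_k : ((k - 1 : ℕ) : ℤ) = (k : ℤ) - 1 := by
      rw [Nat.cast_sub (by omega)]; norm_num
    have hcast_v : ((v - 1 : ℕ) : ℤ) = (v : ℤ) - 1 := by
      rw [Nat.cast_sub (by omega)]; norm_num
    have hcast_kl : ((k - l : ℕ) : ℤ) = (k : ℤ) - l := by
      rw [Nat.cast_sub (by omega)]
    have hvl' : ((v : ℤ) - 1) * l = (k : ℤ) * ((k : ℤ) - 1) := by
      rw [← hcast_v, ← hcast_k]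
      exact_mod_cast step4
    have hS1' : ∑ i : ι, (M i : ℤ) = (k : ℤ) * k := by exact_mod_cast hS1
    have hS2' : ∑ i : ι, (M i : ℤ) ^ 2 = (k : ℤ) * ((k : ℤ) * l + ((k : ℤ) - l)) := by
      rw [← hcast_kl]
      have : ∑ i : ι, (M i : ℤ) ^ 2 = ((∑ i : ι, M i * M i : ℕ) : ℤ) := by
        push_cast; apply Finset.sum_congr rfl; intros; ring
      rw [this, hS2]; push_cast; ring
    have htot : ∑ i : ι, ((M i : ℤ) - l) ^ 2 = ((k : ℤ) - l) ^ 2 := by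
      have hexp : ∑ i : ι, ((M i : ℤ) - l) ^ 2
          = (∑ i : ι, (M i : ℤ) ^ 2) - 2 * l * (∑ i : ι, (M i : ℤ)) + (v : ℤ) * l ^ 2 := by
        have h1 : ∀ i : ι, ((M i : ℤ) - l) ^ 2 = (M i : ℤ) ^ 2 - 2 * l * (M i : ℤ) + l ^ 2 :=
          fun i => by ring
        rw [Finset.sum_congr rfl fun i _ => h1 i, Finset.sum_add_distrib,
          Finset.sum_sub_distrib, ← Finset.mul_sum, Finset.sum_const, nsmul_eq_mul,
          Finset.card_univ, hsym]
      rw [hexp, hS1', hS2']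
      linear_combination (l : ℤ) * hvl'
    have hMj : (M j : ℤ) = k := by
      rw [hMdef]; simp only [Finset.inter_self]
      exact_mod_cast hblock j
    have hzero : ∑ i ∈ univ.erase j, ((M i : ℤ) - l) ^ 2 = 0 := by
      rw [Finset.sum_erase_eq_sub (Finset.mem_univ j), htot, hMj]
      ring
    intro i hi
    have := (Finset.sum_eq_zero_iff_of_nonneg (fun i _ => sq_nonneg ((M i : ℤ) - l))).mp hzero
      i (Finset.mem_erase.mpr ⟨hi, Finset.mem_univ i⟩)
    have : (M i : ℤ) = l := by
      have h' := pow_eq_zero_iff (n := 2) (by norm_num) |>.mp this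
      linarith [h']
    exact_mod_cast this
  -- Construction of the dominating set
  have hι : Nonempty ι := Fintype.card_pos_iff.mp (by omega)
  obtain ⟨j₀⟩ := hι
  obtain ⟨x, hx⟩ := Finset.card_pos.mp (by rw [hblock]; omega : 0 < (B j₀).card)
  obtain ⟨P, hPsub, hPcard⟩ := Finset.exists_subset_card_eq
    (show k - l + 1 ≤ (B j₀).card by rw [hblock]; omega)
  obtain ⟨Q, hQsub, hQcard⟩ := Finset.exists_subset_card_eq
    (show k - l + 1 ≤ (univ.filter fun i => x ∈ B i).card from
      le_trans (by omega : k - l + 1 ≤ k) (le_of_eq (step3 x).symm))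
  set S : Finset (α ⊕ ι) := P.image Sum.inl ∪ Q.image Sum.inr with hSdef
  have hdom : IsDomSet (incGraph B) S := by
    rintro (y | i) hvS
    · -- point y : find a block in Q containing y
      have hyQ : ∃ q ∈ Q, y ∈ B q := by
        by_cases hyx : y = x
        · subst hyx
          obtain ⟨q, hq⟩ := Finset.card_pos.mp (by omega : 0 < Q.card)
          exact ⟨q, hq, (Finset.mem_filter.mp (hQsub hq)).2⟩
        · by_contra hno
          push_neg at hno
          have hQsub' : Q ⊆ (univ.filter fun i => x ∈ B i).filter fun i => y ∉ B i := by
            intro q hq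
            exact Finset.mem_filter.mpr ⟨hQsub hq, hno q hq⟩
          have hcard1 : ((univ.filter fun i => x ∈ B i).filter fun i => y ∈ B i).card = l := by
            rw [Finset.filter_filter]
            exact hpair x y (Ne.symm hyx)
          have hcard2 : ((univ.filter fun i => x ∈ B i).filter fun i => y ∉ B i).card
              = k - l := by
            have := Finset.card_filter_add_card_filter_not
              (s := univ.filter fun i => x ∈ B i) (p := fun i => y ∈ B i)
            have hrx : (univ.filter fun i => x ∈ B i).card = k := step3 x
            rw [hcard1, hrx] at this
            omega
          have := Finset.card_le_card hQsub'
          rw [hQcard, hcard2] at this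
          omega
      obtain ⟨q, hq, hyq⟩ := hyQ
      refine ⟨Sum.inr q, ?_, Or.inl ⟨y, q, rfl, rfl, hyq⟩⟩
      rw [hSdef]
      exact Finset.mem_union_right _ (Finset.mem_image_of_mem _ hq)
    · -- block i : find a point in P inside B i
      have hiP : ∃ p ∈ P, p ∈ B i := by
        by_cases hij : i = j₀
        · subst hij
          obtain ⟨p, hp⟩ := Finset.card_pos.mp (by omega : 0 < P.card)
          exact ⟨p, hp, hPsub hp⟩
        · by_contra hno
          push_neg at hno
          have hPsub' : P ⊆ B j₀ \ B i := by
            intro p hp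
            exact Finset.mem_sdiff.mpr ⟨hPsub hp, hno p hp⟩
          have hcard : (B j₀ \ B i).card = k - l := by
            have h1 : (B j₀ ∩ B i).card = l := by
              rw [Finset.inter_comm]; exact dual j₀ i hij
            have h2 := Finset.card_sdiff_add_card_inter (B j₀) (B i)
            rw [h1, hblock] at h2
            omega
          have := Finset.card_le_card hPsub'
          rw [hPcard, hcard] at this
          omega
      obtain ⟨p, hp, hpi⟩ := hiP
      refine ⟨Sum.inl p, ?_, Or.inr ⟨p, i, rfl, rfl, hpi⟩⟩
      rw [hSdef]
      exact Finset.mem_union_left _ (Finset.mem_image_of_mem _ hp)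
  have hScard : S.card ≤ 2 * (k - l + 1) := by
    calc S.card ≤ (P.image Sum.inl).card + (Q.image Sum.inr).card := Finset.card_union_le _ _
      _ ≤ P.card + Q.card := by
          gcongr <;> exact Finset.card_image_le
      _ = 2 * (k - l + 1) := by rw [hPcard, hQcard]; ring
  exact le_trans (Nat.sInf_le ⟨S, hdom, rfl⟩) hScard
end

section
/- Let D be a symmetric (v,k,λ)-design, i.e., a (v,k,λ)-design whose number of blocks b equals v. Then γ(D) ≤ 2(k - 1). -/
open Finset

variable {α ι : Type*}

/-- For a symmetric `(v,k,λ)`-design (one whose number of blocks equals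
`v`), `γ(D) ≤ 2(k - 1)`. -/
theorem stmt19 [Fintype α] [Fintype ι] [DecidableEq α]
    (B : ι → Finset α) (v k l : ℕ)
    (hv : Fintype.card α = v)
    (hk2 : 2 ≤ k) (hkv : k < v) (hl : 1 ≤ l)
    (hblock : ∀ i, (B i).card = k)
    (hpair : ∀ x y : α, x ≠ y →
      (Finset.univ.filter fun i => x ∈ B i ∧ y ∈ B i).card = l)
    (hsym : Fintype.card ι = v) :
    domNum (incGraph B) ≤ 2 * (k - 1) := by
  classical
  have hv0 : 0 < v := lt_of_le_of_lt (Nat.zero_le k) hkv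
  have hk1 : 0 < k - 1 := by omega
  -- Step A: replication counting
  have hA : ∀ x : α, (univ.filter fun i => x ∈ B i).card * (k - 1) = (v - 1) * l := by
    intro x
    have hcomm := Finset.sum_comm (s := (univ : Finset ι)) (t := (univ : Finset α))
        (f := fun i y => if y ≠ x ∧ x ∈ B i ∧ y ∈ B i then (1 : ℕ) else 0)
    have h1 : ∀ i : ι, (∑ y : α, if y ≠ x ∧ x ∈ B i ∧ y ∈ B i then (1 : ℕ) else 0)
        = if x ∈ B i then k - 1 else 0 := by
      intro i
      by_cases hx : x ∈ B i
      · simp only [hx, if_pos, true_and, and_true]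
        rw [← Finset.card_filter]
        have : (univ.filter fun y => y ≠ x ∧ y ∈ B i) = (B i).erase x := by
          ext y; simp [Finset.mem_erase]
        rw [this, Finset.card_erase_of_mem hx, hblock]
      · simp [hx]
    have h2 : ∀ y : α, (∑ i : ι, if y ≠ x ∧ x ∈ B i ∧ y ∈ B i then (1 : ℕ) else 0)
        = if y = x then 0 else l := by
      intro y
      by_cases hy : y = x
      · simp [hy]
      · simp only [hy, if_neg, Ne, not_false_iff, true_and]
        rw [← Finset.card_filter, hpair x y (fun h => hy h.symm)]
    calc (univ.filter fun i => x ∈ B i).card * (k - 1)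
        = ∑ i ∈ univ.filter fun i => x ∈ B i, (k - 1) := by
          rw [Finset.sum_const, smul_eq_mul]
      _ = ∑ i : ι, if x ∈ B i then k - 1 else 0 := by rw [Finset.sum_filter]
      _ = ∑ i : ι, ∑ y : α, if y ≠ x ∧ x ∈ B i ∧ y ∈ B i then (1 : ℕ) else 0 := by
          exact Finset.sum_congr rfl fun i _ => (h1 i).symm
      _ = ∑ y : α, ∑ i : ι, if y ≠ x ∧ x ∈ B i ∧ y ∈ B i then (1 : ℕ) else 0 := hcomm
      _ = ∑ y : α, if y = x then 0 else l := Finset.sum_congr rfl fun y _ => h2 y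
      _ = ∑ y ∈ univ.filter fun y => ¬ y = x, l := by
          rw [Finset.sum_filter]
          exact Finset.sum_congr rfl fun y _ => by by_cases h : y = x <;> simp [h]
      _ = (v - 1) * l := by
          rw [Finset.sum_const, smul_eq_mul]
          congr 1
          have : (univ.filter fun y => ¬ y = x) = univ.erase x := by
            ext y; simp [Finset.mem_erase]
          rw [this, Finset.card_erase_of_mem (mem_univ x), Finset.card_univ, hv]
  -- Step B: total incidences
  have hB : ∑ x : α, (univ.filter fun i => x ∈ B i).card = v * k := by
    have : ∀ x : α, (univ.filter fun i => x ∈ B i).card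
        = ∑ i : ι, if x ∈ B i then (1 : ℕ) else 0 := fun x => Finset.card_filter _ _
    rw [Finset.sum_congr rfl fun x _ => this x, Finset.sum_comm]
    have : ∀ i : ι, (∑ x : α, if x ∈ B i then (1 : ℕ) else 0) = k := by
      intro i
      rw [← Finset.card_filter]
      have : (univ.filter fun x => x ∈ B i) = B i := by ext y; simp
      rw [this, hblock]
    rw [Finset.sum_congr rfl fun i _ => this i, Finset.sum_const, smul_eq_mul,
      Finset.card_univ, hsym]
  -- Step C
  have hC : (v - 1) * l = k * (k - 1) := by
    have hmain : v * ((v - 1) * l) = v * (k * (k - 1)) := by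
      calc v * ((v - 1) * l) = ∑ _x : α, (v - 1) * l := by
            rw [Finset.sum_const, smul_eq_mul, Finset.card_univ, hv]
        _ = ∑ x : α, (univ.filter fun i => x ∈ B i).card * (k - 1) :=
            Finset.sum_congr rfl fun x _ => (hA x).symm
        _ = (∑ x : α, (univ.filter fun i => x ∈ B i).card) * (k - 1) := by
            rw [Finset.sum_mul]
        _ = v * k * (k - 1) := by rw [hB]
        _ = v * (k * (k - 1)) := by ring
    exact Nat.eq_of_mul_eq_mul_left hv0 hmain
  -- Step D: replication number is k
  have hD : ∀ x : α, (univ.filter fun i => x ∈ B i).card = k := by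
    intro x
    have := (hA x).trans hC
    exact Nat.eq_of_mul_eq_mul_right hk1 this
  -- pick i₀ and p
  have hι : Nonempty ι := Fintype.card_pos_iff.mp (by omega)
  obtain ⟨i₀⟩ := hι
  obtain ⟨p, hp⟩ := Finset.card_pos.mp (by rw [hblock i₀]; omega)
  set E : Finset ι := univ.erase i₀ with hE
  have hEcard : E.card = v - 1 := by
    rw [hE, Finset.card_erase_of_mem (mem_univ i₀), Finset.card_univ, hsym]
  -- F1
  have hF1 : ∑ j ∈ E, (B i₀ ∩ B j).card = (v - 1) * l := by
    have step : ∀ j : ι, (B i₀ ∩ B j).card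
        = ∑ x : α, if x ∈ B i₀ ∧ x ∈ B j then (1 : ℕ) else 0 := by
      intro j
      rw [← Finset.card_filter]
      congr 1; ext x; simp [Finset.mem_inter]
    have step2 : ∀ x : α, (∑ j ∈ E, if x ∈ B i₀ ∧ x ∈ B j then (1 : ℕ) else 0)
        = if x ∈ B i₀ then k - 1 else 0 := by
      intro x
      by_cases hx : x ∈ B i₀
      · simp only [hx, true_and, if_pos]
        rw [← Finset.card_filter]
        have : E.filter (fun j => x ∈ B j) = (univ.filter fun i => x ∈ B i).erase i₀ := by
          ext j; simp [hE, Finset.mem_erase, and_comm]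
        rw [this, Finset.card_erase_of_mem (by simp [hx]), hD]
      · simp [hx]
    calc ∑ j ∈ E, (B i₀ ∩ B j).card
        = ∑ j ∈ E, ∑ x : α, (if x ∈ B i₀ ∧ x ∈ B j then (1 : ℕ) else 0) :=
          Finset.sum_congr rfl fun j _ => step j
      _ = ∑ x : α, ∑ j ∈ E, (if x ∈ B i₀ ∧ x ∈ B j then (1 : ℕ) else 0) := Finset.sum_comm
      _ = ∑ x : α, if x ∈ B i₀ then k - 1 else 0 := Finset.sum_congr rfl fun x _ => step2 x
      _ = ∑ x ∈ univ.filter (fun x => x ∈ B i₀), (k - 1) := (Finset.sum_filter _ _).symm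
      _ = ∑ x ∈ B i₀, (k - 1) := by
          congr 1
          ext x; simp
      _ = k * (k - 1) := by rw [Finset.sum_const, smul_eq_mul, hblock]
      _ = (v - 1) * l := hC.symm
  -- F2: second moment via offDiag
  have hF2 : ∑ j ∈ E, (B i₀ ∩ B j).offDiag.card = (v - 1) * l * (l - 1) := by
    have step : ∀ j : ι, (B i₀ ∩ B j).offDiag.card
        = ∑ q : α × α, if q.1 ∈ B i₀ ∧ q.2 ∈ B i₀ ∧ q.1 ∈ B j ∧ q.2 ∈ B j ∧ q.1 ≠ q.2
            then (1 : ℕ) else 0 := by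
      intro j
      rw [← Finset.card_filter]
      congr 1; ext q
      simp only [Finset.mem_offDiag, Finset.mem_inter, Finset.mem_filter, Finset.mem_univ,
        true_and]
      tauto
    have step2 : ∀ q : α × α,
        (∑ j ∈ E, if q.1 ∈ B i₀ ∧ q.2 ∈ B i₀ ∧ q.1 ∈ B j ∧ q.2 ∈ B j ∧ q.1 ≠ q.2
            then (1 : ℕ) else 0)
        = if q.1 ∈ B i₀ ∧ q.2 ∈ B i₀ ∧ q.1 ≠ q.2 then l - 1 else 0 := by
      rintro ⟨x, y⟩
      by_cases hq : x ∈ B i₀ ∧ y ∈ B i₀ ∧ x ≠ y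
      · obtain ⟨hx, hy, hxy⟩ := hq
        simp only [hx, hy, hxy, true_and, and_true, if_pos, ne_eq, not_false_eq_true]
        rw [← Finset.card_filter]
        have : E.filter (fun j => x ∈ B j ∧ y ∈ B j)
            = (univ.filter fun i => x ∈ B i ∧ y ∈ B i).erase i₀ := by
          ext j; simp [hE, Finset.mem_erase, and_comm]
        rw [this, Finset.card_erase_of_mem (by simp [hx, hy]), hpair x y hxy]
      · rw [if_neg hq]
        refine Finset.sum_eq_zero fun j _ => ?_
        rw [if_neg]
        tauto
    calc ∑ j ∈ E, (B i₀ ∩ B j).offDiag.card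
        = ∑ j ∈ E, ∑ q : α × α, (if q.1 ∈ B i₀ ∧ q.2 ∈ B i₀ ∧ q.1 ∈ B j ∧ q.2 ∈ B j
            ∧ q.1 ≠ q.2 then (1 : ℕ) else 0) := Finset.sum_congr rfl fun j _ => step j
      _ = ∑ q : α × α, ∑ j ∈ E, (if q.1 ∈ B i₀ ∧ q.2 ∈ B i₀ ∧ q.1 ∈ B j ∧ q.2 ∈ B j
            ∧ q.1 ≠ q.2 then (1 : ℕ) else 0) := Finset.sum_comm
      _ = ∑ q : α × α, if q.1 ∈ B i₀ ∧ q.2 ∈ B i₀ ∧ q.1 ≠ q.2 then l - 1 else 0 :=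
          Finset.sum_congr rfl fun q _ => step2 q
      _ = ∑ q ∈ (B i₀).offDiag, (l - 1) := by
          rw [← Finset.sum_filter]
          apply Finset.sum_congr _ (fun _ _ => rfl)
          ext q
          simp only [Finset.mem_filter, Finset.mem_univ, true_and, Finset.mem_offDiag]
      _ = k * (k - 1) * (l - 1) := by
          rw [Finset.sum_const, smul_eq_mul, Finset.offDiag_card, hblock]
          congr 1
          cases k with
          | zero => simp
          | succ n => rw [Nat.succ_sub_one, Nat.mul_succ, Nat.add_sub_cancel]
      _ = (v - 1) * l * (l - 1) := by rw [hC]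
  -- offDiag card in ℤ
  have hoff : ∀ j : ι, ((B i₀ ∩ B j).offDiag.card : ℤ)
      = ((B i₀ ∩ B j).card : ℤ) ^ 2 - (B i₀ ∩ B j).card := by
    intro j
    rw [Finset.offDiag_card]
    have hle : (B i₀ ∩ B j).card ≤ (B i₀ ∩ B j).card * (B i₀ ∩ B j).card := by
      rcases Nat.eq_zero_or_pos (B i₀ ∩ B j).card with h | h
      · simp [h]
      · exact Nat.le_mul_of_pos_left _ h
    push_cast [Nat.cast_sub hle]
    ring
  -- variance argument
  have hvar : ∑ j ∈ E, (((B i₀ ∩ B j).card : ℤ) - l) ^ 2 = 0 := by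
    have expand : ∀ j ∈ E, (((B i₀ ∩ B j).card : ℤ) - l) ^ 2
        = (((B i₀ ∩ B j).offDiag.card : ℤ) + ((B i₀ ∩ B j).card : ℤ))
          - 2 * l * ((B i₀ ∩ B j).card : ℤ) + (l : ℤ) ^ 2 := by
      intro j _
      rw [hoff j]; ring
    calc ∑ j ∈ E, (((B i₀ ∩ B j).card : ℤ) - l) ^ 2
        = ∑ j ∈ E, ((((B i₀ ∩ B j).offDiag.card : ℤ) + ((B i₀ ∩ B j).card : ℤ))
            - 2 * l * ((B i₀ ∩ B j).card : ℤ) + (l : ℤ) ^ 2) :=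
          Finset.sum_congr rfl expand
      _ = ((∑ j ∈ E, ((B i₀ ∩ B j).offDiag.card : ℤ))
            + (∑ j ∈ E, ((B i₀ ∩ B j).card : ℤ)))
          - 2 * l * (∑ j ∈ E, ((B i₀ ∩ B j).card : ℤ)) + (E.card : ℤ) * (l : ℤ) ^ 2 := by
          rw [Finset.sum_add_distrib, Finset.sum_sub_distrib, Finset.sum_add_distrib,
            ← Finset.mul_sum, Finset.sum_const, nsmul_eq_mul]
      _ = 0 := by
          rw [← Nat.cast_sum, ← Nat.cast_sum, hF2, hF1, hEcard]
          have h1 : (1 : ℕ) ≤ l := hl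
          have h2 : (1 : ℕ) ≤ v := hv0
          push_cast [Nat.cast_sub h1, Nat.cast_sub h2]
          ring
  -- Step G: every other block meets B i₀ in exactly l points
  have hG : ∀ j ∈ E, (B i₀ ∩ B j).card = l := by
    intro j hj
    have h0 := (Finset.sum_eq_zero_iff_of_nonneg fun j _ => sq_nonneg
      (((B i₀ ∩ B j).card : ℤ) - l)).mp hvar j hj
    have h1 : ((B i₀ ∩ B j).card : ℤ) = l := sub_eq_zero.mp (pow_eq_zero_iff (by norm_num) |>.mp h0)
    exact_mod_cast h1
  -- the dominating set
  set FB : Finset ι := (univ.filter fun i => p ∈ B i).erase i₀ with hFB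
  have hFBcard : FB.card = k - 1 := by
    rw [hFB, Finset.card_erase_of_mem (by simp [hp]), hD]
  set S : Finset (α ⊕ ι) := ((B i₀).erase p).image Sum.inl ∪ FB.image Sum.inr with hS
  have hinl : ∀ x : α, Sum.inl x ∈ S ↔ x ∈ (B i₀).erase p := by
    intro x; simp [hS]
  have hinr : ∀ j : ι, Sum.inr j ∈ S ↔ j ∈ FB := by
    intro j; simp [hS]
  have hcard : S.card = 2 * (k - 1) := by
    rw [hS, Finset.card_union_of_disjoint (by simp [Finset.disjoint_left]),
      Finset.card_image_of_injective _ Sum.inl_injective,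
      Finset.card_image_of_injective _ Sum.inr_injective,
      Finset.card_erase_of_mem hp, hblock, hFBcard]
    omega
  have hdom : IsDomSet (incGraph B) S := by
    rintro (x | j) hw
    · rw [hinl] at hw
      by_cases hxp : x = p
      · obtain ⟨j, hj⟩ : FB.Nonempty := Finset.card_pos.mp (by rw [hFBcard]; omega)
        have hpj : p ∈ B j := (Finset.mem_filter.mp (Finset.mem_of_mem_erase hj)).2
        exact ⟨Sum.inr j, (hinr j).mpr hj, Or.inl ⟨x, j, rfl, rfl, by rw [hxp]; exact hpj⟩⟩
      · have hxB : x ∉ B i₀ := fun h => hw (Finset.mem_erase.mpr ⟨hxp, h⟩)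
        obtain ⟨j, hj⟩ : (univ.filter fun i => x ∈ B i ∧ p ∈ B i).Nonempty :=
          Finset.card_pos.mp (by rw [hpair x p hxp]; omega)
        rw [Finset.mem_filter] at hj
        have hji : j ≠ i₀ := fun h => hxB (h ▸ hj.2.1)
        have hjFB : j ∈ FB := Finset.mem_erase.mpr
          ⟨hji, Finset.mem_filter.mpr ⟨mem_univ j, hj.2.2⟩⟩
        exact ⟨Sum.inr j, (hinr j).mpr hjFB, Or.inl ⟨x, j, rfl, rfl, hj.2.1⟩⟩
    · rw [hinr] at hw
      by_cases hji : j = i₀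
      · subst hji
        obtain ⟨y, hy⟩ : ((B j).erase p).Nonempty := Finset.card_pos.mp
          (by rw [Finset.card_erase_of_mem hp, hblock]; omega)
        exact ⟨Sum.inl y, (hinl y).mpr hy,
          Or.inr ⟨y, j, rfl, rfl, Finset.mem_of_mem_erase hy⟩⟩
      · have hpj : p ∉ B j := fun h => hw (Finset.mem_erase.mpr
          ⟨hji, Finset.mem_filter.mpr ⟨mem_univ j, h⟩⟩)
        have hjE : j ∈ E := Finset.mem_erase.mpr ⟨hji, mem_univ j⟩
        obtain ⟨y, hy⟩ : (B i₀ ∩ B j).Nonempty := Finset.card_pos.mp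
          (by rw [hG j hjE]; omega)
        rw [Finset.mem_inter] at hy
        have hyp : y ≠ p := fun h => hpj (h ▸ hy.2)
        exact ⟨Sum.inl y, (hinl y).mpr (Finset.mem_erase.mpr ⟨hyp, hy.1⟩),
          Or.inr ⟨y, j, rfl, rfl, hy.2⟩⟩
  exact Nat.sInf_le ⟨S, hdom, hcard⟩
end
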